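/- arXiv:2002.10930 — 8 statements merged into one kernel-verified Lean document; each statement's English description precedes it below -/
import Mathlib

section
/- For every positive integer n, every bipartite graph G with parts A and B each of size n, in which every vertex of A has degree at most 2, contains a bi-hole of size ⌈n/2⌉ - 1; that is, there exist X ⊆ A and Y ⊆ B with |X| = |Y| = ⌈n/2⌉ - 1 and no edge of G between X and Y. -/
/-- A bi-hole of size `k` in an `n × n` bipartite graph with adjacency `G`
between the two parts: sets `X`, `Y` of size `k` with no edge between them. -/
def BiHole (n k : ℕ) (G : Fin n → Fin n → Prop) : Prop :=
  ∃ X Y : Finset (Fin n), X.card = k ∧ Y.card = k ∧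
    ∀ a ∈ X, ∀ b ∈ Y, ¬ G a b

/-- The degree of a vertex `a` of part `A` in the bipartite graph `G`. -/
noncomputable def degA {n : ℕ} (G : Fin n → Fin n → Prop) (a : Fin n) : ℕ :=
  Nat.card {b : Fin n // G a b}

open Classical in
lemma shrink_lemma (n : ℕ) (N : Fin n → Finset (Fin n)) (hN : ∀ a, (N a).card ≤ 2) :
    ∀ d j : ℕ, j + d = n →
      ∃ X : Finset (Fin n), X.card = j ∧ (X.biUnion N).card ≤ j + 1 := by
  intro d
  induction d with
  | zero =>
    intro j hj
    refine ⟨Finset.univ, by simp; omega, ?_⟩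
    calc (Finset.univ.biUnion N).card ≤ (Finset.univ : Finset (Fin n)).card :=
          Finset.card_le_card (Finset.subset_univ _)
      _ = n := by simp
      _ ≤ j + 1 := by omega
  | succ d ih =>
    intro j hj
    obtain ⟨X, hXcard, hXN⟩ := ih (j + 1) (by omega)
    have hXne : X.Nonempty := Finset.card_pos.mp (by omega)
    by_cases hle : (X.biUnion N).card ≤ j + 1
    · obtain ⟨a, ha⟩ := hXne
      refine ⟨X.erase a, by rw [Finset.card_erase_of_mem ha, hXcard]; omega, ?_⟩
      calc ((X.erase a).biUnion N).card ≤ (X.biUnion N).card :=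
            Finset.card_le_card (Finset.biUnion_subset_biUnion_of_subset_left _
              (Finset.erase_subset _ _))
        _ ≤ j + 1 := hle
    · -- |N(X)| = j + 2 ; find a private neighbor
      push_neg at hle
      have hcard : (X.biUnion N).card = j + 2 := by omega
      set T := X.biUnion N with hT
      have hpriv : ∃ a ∈ X, ∃ b ∈ N a, ∀ a' ∈ X, a' ≠ a → b ∉ N a' := by
        by_contra hcon
        push_neg at hcon
        have hcnt : ∀ b ∈ T, 2 ≤ (X.filter fun a => b ∈ N a).card := by
          intro b hb
          obtain ⟨a, ha, hbN⟩ := Finset.mem_biUnion.mp hb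
          obtain ⟨a', ha', hne, hbN'⟩ := hcon a ha b hbN
          have hsub : ({a', a} : Finset (Fin n)) ⊆ X.filter fun a => b ∈ N a := by
            intro x hx
            rcases Finset.mem_insert.mp hx with h | h
            · subst h; exact Finset.mem_filter.mpr ⟨ha', hbN'⟩
            · rw [Finset.mem_singleton] at h; subst h
              exact Finset.mem_filter.mpr ⟨ha, hbN⟩
          have : ({a', a} : Finset (Fin n)).card = 2 := by
            rw [Finset.card_insert_of_notMem (by simpa using hne), Finset.card_singleton]
          calc 2 = ({a', a} : Finset (Fin n)).card := this.symm
            _ ≤ _ := Finset.card_le_card hsub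
        have hswap : ∑ b ∈ T, (X.filter fun a => b ∈ N a).card
            = ∑ a ∈ X, (T.filter fun b => b ∈ N a).card := by
          simp_rw [Finset.card_filter]
          exact Finset.sum_comm
        have h1 : 2 * T.card ≤ ∑ b ∈ T, (X.filter fun a => b ∈ N a).card := by
          calc 2 * T.card = ∑ _b ∈ T, 2 := by rw [Finset.sum_const, smul_eq_mul, mul_comm]
            _ ≤ _ := Finset.sum_le_sum hcnt
        have h2 : ∑ a ∈ X, (T.filter fun b => b ∈ N a).card ≤ 2 * X.card := by
          calc ∑ a ∈ X, (T.filter fun b => b ∈ N a).card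
              ≤ ∑ a ∈ X, (N a).card := by
                refine Finset.sum_le_sum fun a _ => ?_
                exact Finset.card_le_card (fun b hb => (Finset.mem_filter.mp hb).2)
            _ ≤ ∑ _a ∈ X, 2 := Finset.sum_le_sum fun a _ => hN a
            _ = 2 * X.card := by rw [Finset.sum_const, smul_eq_mul, mul_comm]
        rw [hswap] at h1
        have := le_trans h1 h2
        rw [hcard, hXcard] at this
        omega
      obtain ⟨a, ha, b, hbN, hpriv⟩ := hpriv
      refine ⟨X.erase a, by rw [Finset.card_erase_of_mem ha, hXcard]; omega, ?_⟩
      have hsub : (X.erase a).biUnion N ⊆ T.erase b := by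
        intro b' hb'
        obtain ⟨a', ha', hb'N⟩ := Finset.mem_biUnion.mp hb'
        have ha'X : a' ∈ X := Finset.mem_of_mem_erase ha'
        refine Finset.mem_erase.mpr ⟨?_, Finset.mem_biUnion.mpr ⟨a', ha'X, hb'N⟩⟩
        rintro rfl
        exact hpriv a' ha'X (Finset.ne_of_mem_erase ha') hb'N
      calc ((X.erase a).biUnion N).card ≤ (T.erase b).card := Finset.card_le_card hsub
        _ = T.card - 1 := Finset.card_erase_of_mem (Finset.mem_biUnion.mpr ⟨a, ha, hbN⟩)
        _ ≤ j + 1 := by omega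

/-- every `n × n` bipartite graph with one-sided maximum degree at
most 2 contains a bi-hole of size `⌈n/2⌉ - 1`. -/
theorem bihole_of_max_degree_two (n : ℕ) (hn : 1 ≤ n)
    (G : Fin n → Fin n → Prop) (hdeg : ∀ a, degA G a ≤ 2) :
    BiHole n ((n + 1) / 2 - 1) G := by
  classical
  set k := (n + 1) / 2 - 1 with hk
  set N : Fin n → Finset (Fin n) := fun a => Finset.univ.filter (fun b => G a b) with hNdef
  have hN : ∀ a, (N a).card ≤ 2 := by
    intro a
    have : (N a).card = degA G a := by
      rw [degA, Nat.card_eq_fintype_card]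
      simp [hNdef, Fintype.card_subtype]
    rw [this]; exact hdeg a
  obtain ⟨X, hXcard, hXN⟩ := shrink_lemma n N hN (n - k) k (by omega)
  have hcompl : k ≤ ((X.biUnion N)ᶜ : Finset (Fin n)).card := by
    rw [Finset.card_compl]
    have h2k : 2 * k + 2 ≤ n + 1 := by omega
    simp only [Fintype.card_fin]
    omega
  obtain ⟨Y, hYsub, hYcard⟩ := Finset.exists_subset_card_eq hcompl
  refine ⟨X, Y, hXcard, hYcard, ?_⟩
  intro a ha b hb hG
  have hbT : b ∈ X.biUnion N := Finset.mem_biUnion.mpr ⟨a, ha, by simp [hNdef, hG]⟩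
  have := hYsub hb
  rw [Finset.mem_compl] at this
  exact this hbT
end

section
/- Let G be a graph with n vertices and n edges (n ≥ 2). Then G contains a set E' of ⌈n/2⌉ - 1 edges and a set V' of ⌈n/2⌉ - 1 vertices such that no edge of E' is incident to any vertex of V'. -/
open Finset

section Aux

variable {V : Type*} [Fintype V] [DecidableEq V] {ι : Type*} [DecidableEq ι]

/-- endpoints of an edge as a Finset -/
private def ends (s : Sym2 V) : Finset V := Finset.univ.filter (· ∈ s)

private lemma card_ends_le (s : Sym2 V) : (ends s).card ≤ 2 := by
  induction s using Sym2.ind with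
  | _ a b =>
    have : ends (s(a, b)) ⊆ {a, b} := by
      intro v hv
      simp [ends, Sym2.mem_iff] at hv
      simp [hv]
    calc (ends (s(a,b))).card ≤ ({a, b} : Finset V).card := card_le_card this
      _ ≤ 2 := card_insert_le _ _ |>.trans (by simp)

private lemma mem_ends {s : Sym2 V} {v : V} : v ∈ ends s ↔ v ∈ s := by
  simp [ends]

/-- cover of a set of edge indices -/
private def cover (e : ι → Sym2 V) (S : Finset ι) : Finset V := S.biUnion fun i => ends (e i)

/-- Key lemma: a family `F` of edges whose cover has at most `|F| + 1` vertices contains,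
for each `k ≤ |F|`, a subfamily of `k` edges covering at most `k + 1` vertices. -/
private lemma key (e : ι → Sym2 V) (d : ℕ) :
    ∀ (F : Finset ι) (k : ℕ), F.card = k + d →
    (cover e F).card ≤ F.card + 1 →
    ∃ S ⊆ F, S.card = k ∧ (cover e S).card ≤ k + 1 := by
  induction d with
  | zero => intro F k hk hc; exact ⟨F, Finset.Subset.refl F, by omega, by omega⟩
  | succ d ih =>
    intro F k hk hc
    -- find i ∈ F with (cover e (F.erase i)).card ≤ F.card
    have hF : 0 < F.card := by omega
    obtain ⟨i, hi, hci⟩ : ∃ i ∈ F, (cover e (F.erase i)).card ≤ F.card := by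
      by_cases hle : (cover e F).card ≤ F.card
      · obtain ⟨i, hi⟩ := Finset.card_pos.mp hF
        exact ⟨i, hi, le_trans (card_le_card (biUnion_subset_biUnion_of_subset_left _
          (erase_subset _ _))) hle⟩
      · have hcF : (cover e F).card = F.card + 1 := by omega
        -- degree argument: some vertex in the cover has degree exactly 1
        have hsum : ∑ v ∈ cover e F, (F.filter fun i => v ∈ e i).card ≤ 2 * F.card := by
          have : ∑ v ∈ cover e F, (F.filter fun i => v ∈ e i).card
              = ∑ i ∈ F, ((cover e F).filter fun v => v ∈ e i).card := by
            simp only [card_filter]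
            exact Finset.sum_comm
          rw [this]
          calc ∑ i ∈ F, ((cover e F).filter fun v => v ∈ e i).card
              ≤ ∑ i ∈ F, 2 := by
                refine Finset.sum_le_sum fun i _ => ?_
                refine le_trans (card_le_card ?_) (card_ends_le (e i))
                intro v hv
                exact mem_ends.mpr (mem_filter.mp hv).2
            _ = 2 * F.card := by rw [Finset.sum_const, smul_eq_mul, mul_comm]
        obtain ⟨v, hv, hdeg⟩ : ∃ v ∈ cover e F, (F.filter fun i => v ∈ e i).card ≤ 1 := by
          by_contra h
          push_neg at h
          have : 2 * (cover e F).card ≤ ∑ v ∈ cover e F, (F.filter fun i => v ∈ e i).card := by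
            calc 2 * (cover e F).card = ∑ _v ∈ cover e F, 2 := by
                  rw [Finset.sum_const, smul_eq_mul, mul_comm]
              _ ≤ _ := Finset.sum_le_sum fun v hv => h v hv
          omega
        obtain ⟨i, hi, hvi⟩ : ∃ i ∈ F, v ∈ e i := by
          simpa [cover, mem_ends] using hv
        refine ⟨i, hi, ?_⟩
        have hvnot : v ∉ cover e (F.erase i) := by
          intro hvc
          obtain ⟨j, hj, hvj⟩ : ∃ j ∈ F.erase i, v ∈ e j := by
            simpa [cover, mem_ends] using hvc
          have hjF := mem_of_mem_erase hj
          have hji := ne_of_mem_erase hj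
          have h1 : i ∈ F.filter fun i => v ∈ e i := mem_filter.mpr ⟨hi, hvi⟩
          have h2 : j ∈ F.filter fun i => v ∈ e i := mem_filter.mpr ⟨hjF, hvj⟩
          have : ({i, j} : Finset ι) ⊆ F.filter fun i => v ∈ e i := by
            intro x hx; simp at hx; rcases hx with rfl | rfl <;> assumption
          have := card_le_card this
          rw [card_insert_of_notMem (by simp [hji.symm]), card_singleton] at this
          omega
        have hsub : cover e (F.erase i) ⊆ (cover e F).erase v := by
          intro w hw
          refine mem_erase.mpr ⟨fun h => hvnot (h ▸ hw), ?_⟩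
          exact biUnion_subset_biUnion_of_subset_left _ (erase_subset _ _) hw
        calc (cover e (F.erase i)).card ≤ ((cover e F).erase v).card := card_le_card hsub
          _ = (cover e F).card - 1 := card_erase_of_mem hv
          _ ≤ F.card := by omega
    have hcard : (F.erase i).card = k + d := by
      rw [card_erase_of_mem hi]; omega
    obtain ⟨S, hS, hSk, hSc⟩ := ih (F.erase i) k hcard (by omega)
    exact ⟨S, hS.trans (erase_subset _ _), hSk, hSc⟩

end Aux

/-- a (multi)graph with `n` vertices and `n` edges (`n ≥ 2`),
given by an edge-indexing function `e : Fin n → Sym2 V`, contains a set `E'` of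
`⌈n/2⌉ - 1` edges and a set `V'` of `⌈n/2⌉ - 1` vertices such that no edge of
`E'` is incident to a vertex of `V'`. -/
theorem edges_vertices_separation (n : ℕ) (hn : 2 ≤ n)
    (V : Type*) [Fintype V] (hV : Fintype.card V = n)
    (e : Fin n → Sym2 V) :
    ∃ (E' : Finset (Fin n)) (V' : Finset V),
      E'.card = (n + 1) / 2 - 1 ∧ V'.card = (n + 1) / 2 - 1 ∧
      ∀ i ∈ E', ∀ v ∈ V', v ∉ e i := by
  classical
  set k := (n + 1) / 2 - 1 with hk
  have hkn : k ≤ n := by omega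
  have hcard_univ : (Finset.univ : Finset (Fin n)).card = n := by simp
  have hcover_le : (cover e Finset.univ).card ≤ n + 1 := by
    have : (cover e Finset.univ).card ≤ Fintype.card V := card_le_univ _
    omega
  obtain ⟨E', _, hE'card, hE'cov⟩ := key e (n - k) Finset.univ k (by omega) (by omega)
  have hfree : k ≤ (Finset.univ \ cover e E').card := by
    have h1 : (Finset.univ \ cover e E').card = n - (cover e E').card := by
      rw [card_sdiff_of_subset (subset_univ _)]; simp [hV]
    have h2 : 2 * ((n+1)/2) ≤ n + 1 := by omega
    omega
  obtain ⟨V', hV'sub, hV'card⟩ := Finset.exists_subset_card_eq hfree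
  refine ⟨E', V', hE'card, hV'card, ?_⟩
  intro i hi v hv hvi
  have hv' := hV'sub hv
  rw [Finset.mem_sdiff] at hv'
  exact hv'.2 (Finset.mem_biUnion.mpr ⟨i, hi, mem_ends.mpr hvi⟩)
end

section
/- For all integers n, Δ ≥ 2, every bipartite graph with parts A and B each of size n in which every vertex of A has degree at most Δ contains a bi-hole of size ⌊(n-2)/Δ⌋. -/
namespace BiholeAux

open Finset

attribute [local instance] Classical.propDecidable

variable {n : ℕ}

/-- The "share a neighbor" reachability relation on the A side. -/
def Reach (N : Fin n → Finset (Fin n)) : Fin n → Fin n → Prop :=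
  Relation.ReflTransGen (fun a b => (N a ∩ N b).Nonempty)

lemma reach_symm {N : Fin n → Finset (Fin n)} {a b : Fin n} (h : Reach N a b) :
    Reach N b a := by
  induction h with
  | refl => exact Relation.ReflTransGen.refl
  | tail h1 h2 ih =>
      exact Relation.ReflTransGen.trans
        (Relation.ReflTransGen.single (by rwa [Finset.inter_comm] at h2)) ih

lemma reach_trans {N : Fin n → Finset (Fin n)} {a b c : Fin n}
    (h1 : Reach N a b) (h2 : Reach N b c) : Reach N a c :=
  Relation.ReflTransGen.trans h1 h2

lemma crossing {N : Fin n → Finset (Fin n)} {P : Finset (Fin n)} {u v : Fin n}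
    (h : Reach N u v) (hu : u ∈ P) (hv : v ∉ P) :
    ∃ x ∈ P, ∃ y, y ∉ P ∧ (N x ∩ N y).Nonempty := by
  revert hv
  induction h with
  | refl => intro hv; exact absurd hu hv
  | @tail b c h1 h2 ih =>
      intro hv
      by_cases hb : b ∈ P
      · exact ⟨b, hb, c, hv, h2⟩
      · exact ih hb

/-- The component of `a`. -/
noncomputable def comp (N : Fin n → Finset (Fin n)) (a : Fin n) : Finset (Fin n) :=
  Finset.univ.filter (Reach N a)

lemma mem_comp {N : Fin n → Finset (Fin n)} {a x : Fin n} :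
    x ∈ comp N a ↔ Reach N a x := by
  simp [comp]

lemma self_mem_comp {N : Fin n → Finset (Fin n)} (a : Fin n) : a ∈ comp N a :=
  mem_comp.mpr Relation.ReflTransGen.refl

lemma comp_eq {N : Fin n → Finset (Fin n)} {a b : Fin n} (h : Reach N a b) :
    comp N a = comp N b := by
  ext x
  simp only [mem_comp]
  exact ⟨fun hx => reach_trans (reach_symm h) hx, fun hx => reach_trans h hx⟩

lemma comp_disj {N : Fin n → Finset (Fin n)} {a b : Fin n}
    (h : comp N a ≠ comp N b) : Disjoint (comp N a) (comp N b) := by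
  rw [Finset.disjoint_left]
  intro x hx hx'
  exact h ((comp_eq (mem_comp.mp hx)).trans (comp_eq (mem_comp.mp hx')).symm)

lemma compN_disj {N : Fin n → Finset (Fin n)} {a b : Fin n}
    (h : comp N a ≠ comp N b) :
    Disjoint ((comp N a).biUnion N) ((comp N b).biUnion N) := by
  rw [Finset.disjoint_left]
  intro c hc hc'
  obtain ⟨x, hx, hcx⟩ := Finset.mem_biUnion.mp hc
  obtain ⟨y, hy, hcy⟩ := Finset.mem_biUnion.mp hc'
  have hxy : Reach N x y := Relation.ReflTransGen.single ⟨c, Finset.mem_inter.mpr ⟨hcx, hcy⟩⟩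
  exact h (comp_eq (reach_trans (mem_comp.mp hx) (hxy.trans (reach_symm (mem_comp.mp hy)))))

/-- A connected partial piece of a component covering few B-vertices. -/
lemma partial_cover {N : Fin n → Finset (Fin n)} {Δ : ℕ} (hΔ : 1 ≤ Δ)
    (hdeg : ∀ a, (N a).card ≤ Δ) (a : Fin n) :
    ∀ j, 1 ≤ j → j ≤ (comp N a).card →
      ∃ P, P ⊆ comp N a ∧ P.card = j ∧ (P.biUnion N).card ≤ j * (Δ - 1) + 1 := by
  intro j
  induction j with
  | zero => intro h; omega
  | succ j ih =>
      intro _ hle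
      by_cases hj : j = 0
      · subst hj
        refine ⟨{a}, ?_, by simp, ?_⟩
        · simp [Finset.singleton_subset_iff, self_mem_comp]
        · simp only [Finset.singleton_biUnion]
          have := hdeg a
          omega
      · obtain ⟨P, hPsub, hPcard, hPcost⟩ := ih (by omega) (by omega)
        -- P is a proper nonempty subset of the component
        have hPne : P.Nonempty := Finset.card_pos.mp (by omega)
        have hPssub : P ⊂ comp N a :=
          Finset.ssubset_iff_subset_ne.mpr ⟨hPsub, fun h => by rw [h] at hPcard; omega⟩
        obtain ⟨z, hz, hznP⟩ := Finset.exists_of_ssubset hPssub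
        obtain ⟨y0, hy0⟩ := hPne
        have hreach : Reach N y0 z :=
          reach_trans (reach_symm (mem_comp.mp (hPsub hy0))) (mem_comp.mp hz)
        obtain ⟨x, hxP, y, hynP, hshare⟩ := crossing hreach hy0 hznP
        have hycomp : y ∈ comp N a := by
          rw [mem_comp]
          exact (mem_comp.mp (hPsub hxP)).tail hshare
        refine ⟨insert y P, ?_, ?_, ?_⟩
        · exact Finset.insert_subset hycomp hPsub
        · rw [Finset.card_insert_of_notMem hynP, hPcard]
        · rw [Finset.biUnion_insert]
          obtain ⟨c, hc⟩ := hshare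
          have hcx : c ∈ N x := (Finset.mem_inter.mp hc).1
          have hcy : c ∈ N y := (Finset.mem_inter.mp hc).2
          have hcU : c ∈ P.biUnion N := Finset.mem_biUnion.mpr ⟨x, hxP, hcx⟩
          have hsub : N y \ P.biUnion N ⊆ (N y).erase c :=
            fun t ht => Finset.mem_erase.mpr
              ⟨fun h => (Finset.mem_sdiff.mp ht).2 (h ▸ hcU), (Finset.mem_sdiff.mp ht).1⟩
          have h1 : (N y \ P.biUnion N).card ≤ Δ - 1 := by
            have := Finset.card_le_card hsub
            rw [Finset.card_erase_of_mem hcy] at this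
            have := hdeg y
            omega
          have h2 : (N y ∪ P.biUnion N).card ≤ (P.biUnion N).card + (N y \ P.biUnion N).card := by
            rw [← Finset.card_sdiff_add_card (N y) (P.biUnion N)]
            omega
          calc (N y ∪ P.biUnion N).card
              ≤ (P.biUnion N).card + (N y \ P.biUnion N).card := h2
            _ ≤ (j * (Δ - 1) + 1) + (Δ - 1) := by omega
            _ = (j + 1) * (Δ - 1) + 1 := by ring

/-- Key lemma: there is a set `X` of size `k = (n-2)/Δ` whose neighborhood
has size at most `n - k`. -/
lemma key (N : Fin n → Finset (Fin n)) {Δ : ℕ} (hn : 2 ≤ n) (hΔ : 2 ≤ Δ)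
    (hdeg : ∀ a, (N a).card ≤ Δ) :
    ∃ X : Finset (Fin n), X.card = (n - 2) / Δ ∧
      (X.biUnion N).card ≤ n - (n - 2) / Δ := by
  set k := (n - 2) / Δ with hk
  have hkΔ : k * Δ ≤ n - 2 := Nat.div_mul_le_self _ _
  have h2k : 2 * k ≤ n - 2 := by nlinarith
  have hkn : k ≤ n := by omega
  set comps : Finset (Finset (Fin n)) := Finset.univ.image (comp N) with hcomps
  -- basic facts about comps
  have hmemcomps : ∀ C ∈ comps, ∃ a, C = comp N a := by
    intro C hC
    obtain ⟨a, _, ha⟩ := Finset.mem_image.mp hC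
    exact ⟨a, ha.symm⟩
  have hdisj : ∀ C ∈ comps, ∀ D ∈ comps, C ≠ D → Disjoint C D := by
    intro C hC D hD hne
    obtain ⟨a, rfl⟩ := hmemcomps C hC
    obtain ⟨b, rfl⟩ := hmemcomps D hD
    exact comp_disj hne
  have hNdisj : ∀ C ∈ comps, ∀ D ∈ comps, C ≠ D →
      Disjoint (C.biUnion N) (D.biUnion N) := by
    intro C hC D hD hne
    obtain ⟨a, rfl⟩ := hmemcomps C hC
    obtain ⟨b, rfl⟩ := hmemcomps D hD
    exact compN_disj hne
  have hcover : comps.biUnion (fun C => C) = Finset.univ := by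
    ext x
    simp only [Finset.mem_biUnion, Finset.mem_univ, iff_true]
    exact ⟨comp N x, Finset.mem_image.mpr ⟨x, Finset.mem_univ x, rfl⟩, self_mem_comp x⟩
  have hsum_card : ∑ C ∈ comps, C.card = n := by
    have h := Finset.card_biUnion (s := comps) (t := fun C => C) hdisj
    rw [hcover, Finset.card_univ, Fintype.card_fin] at h
    simpa using h.symm
  have hsum_w : ∑ C ∈ comps, (C.biUnion N).card ≤ n := by
    rw [← Finset.card_biUnion hNdisj]
    calc (comps.biUnion fun C => C.biUnion N).card ≤ (Finset.univ : Finset (Fin n)).card :=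
          Finset.card_le_card (Finset.subset_univ _)
      _ = n := by rw [Finset.card_univ, Fintype.card_fin]
  -- components are nonempty
  have hcompne : ∀ C ∈ comps, 1 ≤ C.card := by
    intro C hC
    obtain ⟨a, rfl⟩ := hmemcomps C hC
    exact Finset.card_pos.mpr ⟨a, self_mem_comp a⟩
  -- choose a maximal valid family T
  set cand : Finset (Finset (Finset (Fin n))) :=
    comps.powerset.filter (fun T => (∑ C ∈ T, C.card ≤ k) ∧
      (∑ C ∈ T, (C.biUnion N).card ≤ ∑ C ∈ T, C.card)) with hcand
  have hcand_ne : (∅ : Finset (Finset (Fin n))) ∈ cand := by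
    simp [hcand]
  obtain ⟨T, hTcand, hTmax⟩ := Finset.exists_max_image cand (fun T => ∑ C ∈ T, C.card)
    ⟨∅, hcand_ne⟩
  rw [hcand, Finset.mem_filter, Finset.mem_powerset] at hTcand
  obtain ⟨hTsub, hTk, hTw⟩ := hTcand
  set S := ∑ C ∈ T, C.card with hS
  set W := ∑ C ∈ T, (C.biUnion N).card with hW
  -- the union of T as an X-part
  have hTdisj : ∀ C ∈ T, ∀ D ∈ T, C ≠ D → Disjoint (id C) (id D) := by
    intro C hC D hD hne
    exact hdisj C (hTsub hC) D (hTsub hD) hne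
  have hTcard : (T.biUnion id).card = S := Finset.card_biUnion hTdisj
  have hTcost : ((T.biUnion id).biUnion N).card ≤ W := by
    have : (T.biUnion id).biUnion N = T.biUnion (fun C => C.biUnion N) := by
      ext c
      simp [Finset.mem_biUnion]
      tauto
    rw [this]
    exact Finset.card_biUnion_le
  by_cases hSk : S = k
  · exact ⟨T.biUnion id, by rw [hTcard, hSk], by
      have : W ≤ k := by omega
      have := hTcost
      omega⟩
  -- otherwise, there is a leftover component of size > k - S
  have hSlt : S < k := lt_of_le_of_ne hTk hSk
  have hexC : ∃ C₀ ∈ comps, C₀ ∉ T ∧ k - S < C₀.card := by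
    by_contra hcon
    push_neg at hcon
    -- comps \ T is nonempty
    have hrest_ne : (comps \ T).Nonempty := by
      rw [Finset.sdiff_nonempty]
      intro hsub
      have : T = comps := Finset.Subset.antisymm hTsub hsub
      rw [this] at hS
      omega
    -- pick minimal-excess leftover component
    obtain ⟨Cm, hCm, hCmmin⟩ := Finset.exists_min_image (comps \ T)
      (fun C => ((C.biUnion N).card : ℤ) - C.card) hrest_ne
    have hCmcomps : Cm ∈ comps := (Finset.mem_sdiff.mp hCm).1
    have hCmnT : Cm ∉ T := (Finset.mem_sdiff.mp hCm).2
    have hCmsmall : Cm.card ≤ k - S := hcon Cm hCmcomps hCmnT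
    -- key cost bound: W + cost Cm ≤ S + card Cm
    have hkey : (Cm.biUnion N).card + W ≤ Cm.card + S := by
      by_cases hecm : ((Cm.biUnion N).card : ℤ) - Cm.card ≤ 0
      · have : (Cm.biUnion N).card ≤ Cm.card := by exact_mod_cast by linarith
        omega
      · push_neg at hecm
        -- all leftover excesses are positive, sum bound
        have hsplitw : ∑ C ∈ comps \ T, (C.biUnion N).card + W
            = ∑ C ∈ comps, (C.biUnion N).card :=
          Finset.sum_sdiff (f := fun C => (C.biUnion N).card) hTsub
        have hsplits : ∑ C ∈ comps \ T, C.card + S = ∑ C ∈ comps, C.card :=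
          Finset.sum_sdiff (f := fun C => C.card) hTsub
        have hsum_excess : ((Cm.biUnion N).card : ℤ) - Cm.card
            ≤ ∑ C ∈ comps \ T, (((C.biUnion N).card : ℤ) - C.card) := by
          apply Finset.single_le_sum (f := fun C => ((C.biUnion N).card : ℤ) - C.card)
            (fun C hC => le_of_lt (lt_of_lt_of_le hecm (hCmmin C hC))) hCm
        have hsum_excess2 : ∑ C ∈ comps \ T, (((C.biUnion N).card : ℤ) - C.card)
            ≤ (S : ℤ) - W := by
          rw [Finset.sum_sub_distrib, ← Nat.cast_sum, ← Nat.cast_sum]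
          omega
        have : ((Cm.biUnion N).card : ℤ) + W ≤ (Cm.card : ℤ) + S := by linarith
        exact_mod_cast this
    -- insert Cm into T: still valid, larger sum: contradiction
    have hins : insert Cm T ∈ cand := by
      rw [hcand, Finset.mem_filter, Finset.mem_powerset]
      refine ⟨Finset.insert_subset hCmcomps hTsub, ?_, ?_⟩
      · rw [Finset.sum_insert hCmnT]
        omega
      · rw [Finset.sum_insert hCmnT, Finset.sum_insert hCmnT]
        omega
    have := hTmax _ hins
    rw [Finset.sum_insert hCmnT] at this
    have h1 := hcompne Cm hCmcomps
    omega
  obtain ⟨C₀, hC₀comps, hC₀nT, hC₀big⟩ := hexC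
  obtain ⟨a₀, rfl⟩ := hmemcomps C₀ hC₀comps
  set j := k - S with hj
  have hj1 : 1 ≤ j := by omega
  obtain ⟨P, hPsub, hPcard, hPcost⟩ :=
    partial_cover (N := N) (by omega) hdeg a₀ j hj1 (by omega)
  -- assemble X
  have hdisjTP : Disjoint (T.biUnion id) P := by
    rw [Finset.disjoint_biUnion_left]
    intro C hC
    exact Finset.disjoint_of_subset_right hPsub
      (hdisj C (hTsub hC) _ hC₀comps (fun h => hC₀nT (h ▸ hC)))
  refine ⟨T.biUnion id ∪ P, ?_, ?_⟩
  · rw [Finset.card_union_of_disjoint hdisjTP, hTcard, hPcard]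
    omega
  · have hXcost : ((T.biUnion id ∪ P).biUnion N).card
        ≤ W + (j * (Δ - 1) + 1) := by
      have hbu : (T.biUnion id ∪ P).biUnion N
          = (T.biUnion id).biUnion N ∪ P.biUnion N := by
        ext c
        simp only [Finset.mem_biUnion, Finset.mem_union]
        constructor
        · rintro ⟨x, hx | hx, hc⟩
          · exact Or.inl ⟨x, hx, hc⟩
          · exact Or.inr ⟨x, hx, hc⟩
        · rintro (⟨x, hx, hc⟩ | ⟨x, hx, hc⟩)
          · exact ⟨x, Or.inl hx, hc⟩
          · exact ⟨x, Or.inr hx, hc⟩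
      rw [hbu]
      calc ((T.biUnion id).biUnion N ∪ P.biUnion N).card
          ≤ ((T.biUnion id).biUnion N).card + (P.biUnion N).card :=
            Finset.card_union_le _ _
        _ ≤ W + (j * (Δ - 1) + 1) := by omega
    -- final arithmetic
    obtain ⟨d, rfl⟩ : ∃ d, Δ = d + 2 := ⟨Δ - 2, by omega⟩
    have e0 : d + 2 - 1 = d + 1 := by omega
    rw [e0] at hXcost
    have e1 : j * (d + 2) = j * (d + 1) + j := by ring
    have e2 : k * (d + 2) = S * (d + 2) + j * (d + 2) := by
      rw [← Nat.add_mul]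
      congr 1
      omega
    have e3 : 2 * S ≤ S * (d + 2) := by nlinarith
    have hWS : W ≤ S := hTw
    omega

end BiholeAux

/-- for `n, Δ ≥ 2`, every `n × n` bipartite graph with one-sided
maximum degree at most `Δ` contains a bi-hole of size `⌊(n-2)/Δ⌋`. -/
theorem bihole_general_delta (n Δ : ℕ) (hn : 2 ≤ n) (hΔ : 2 ≤ Δ)
    (G : Fin n → Fin n → Prop) (hdeg : ∀ a, degA G a ≤ Δ) :
    BiHole n ((n - 2) / Δ) G := by
  classical
  set N : Fin n → Finset (Fin n) := fun a => Finset.univ.filter (fun b => G a b) with hN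
  have hNdeg : ∀ a, (N a).card ≤ Δ := by
    intro a
    have : (N a).card = degA G a := by
      rw [hN, degA, Nat.card_eq_fintype_card, Fintype.card_subtype]
    rw [this]
    exact hdeg a
  obtain ⟨X, hXcard, hXcost⟩ := BiholeAux.key N hn hΔ hNdeg
  set k := (n - 2) / Δ with hk
  have hY : k ≤ (Finset.univ \ X.biUnion N).card := by
    rw [Finset.card_sdiff_of_subset (Finset.subset_univ _), Finset.card_univ, Fintype.card_fin]
    have h2 : (X.biUnion N).card ≤ n := by
      simpa using Finset.card_le_univ (X.biUnion N)
    have h3 : (n - 2) / Δ ≤ n - 2 := Nat.div_le_self _ _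
    omega
  obtain ⟨Y, hYsub, hYcard⟩ := Finset.exists_subset_card_eq hY
  refine ⟨X, Y, hXcard, hYcard, ?_⟩
  intro a ha b hb hG
  have hbU : b ∈ X.biUnion N := Finset.mem_biUnion.mpr ⟨a, ha, by simp [hN, hG]⟩
  have := Finset.mem_sdiff.mp (hYsub hb)
  exact this.2 hbU
end

section
/- Let n, Δ ≥ 2 be integers and let ξ ∈ (0,1) satisfy 1 - ξ^Δ ≥ ξ. Then f(n, Δ) ≥ f(⌊ξ n⌋, Δ - 1), where f(m, d) denotes the largest k such that every m × m bipartite graph whose vertices in one part all have degree at most d contains a bi-hole of size k. -/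
/-- `f(n, Δ)`: the largest `k` such that every `n × n` bipartite graph whose
vertices in one part all have degree at most `Δ` contains a bi-hole of size `k`. -/
noncomputable def f (n Δ : ℕ) : ℕ :=
  sSup {k | ∀ G : Fin n → Fin n → Prop, (∀ a, degA G a ≤ Δ) → BiHole n k G}

open Finset

lemma natCard_subtype {α : Type*} [Fintype α] (p : α → Prop) [DecidablePred p] :
    Nat.card {x // p x} = (univ.filter p).card := by
  simp [Nat.card_eq_fintype_card, Fintype.card_subtype]

lemma f_bddAbove (m d : ℕ) :
    BddAbove {k | ∀ G : Fin m → Fin m → Prop, (∀ a, degA G a ≤ d) → BiHole m k G} := by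
  refine ⟨m, fun k hk => ?_⟩
  have hdeg : ∀ a : Fin m, degA (fun _ _ => False) a ≤ d := by
    intro a
    haveI : IsEmpty {b : Fin m // False} := ⟨fun x => x.2⟩
    rw [degA, Nat.card_of_isEmpty]
    exact Nat.zero_le d
  obtain ⟨X, _, hX, _, _⟩ := hk (fun _ _ => False) hdeg
  calc k = X.card := hX.symm
    _ ≤ Fintype.card (Fin m) := Finset.card_le_univ X
    _ = m := Fintype.card_fin m

lemma f_spec (m d : ℕ) :
    ∀ G : Fin m → Fin m → Prop, (∀ a, degA G a ≤ d) → BiHole m (f m d) G := by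
  have h0 : (0 : ℕ) ∈ {k | ∀ G : Fin m → Fin m → Prop,
      (∀ a, degA G a ≤ d) → BiHole m k G} := by
    intro G _
    exact ⟨∅, ∅, by simp, by simp, by simp⟩
  exact Nat.sSup_mem ⟨0, h0⟩ (f_bddAbove m d)

lemma desc_ineq : ∀ (d m n : ℕ), m ≤ n →
    m.descFactorial d * n ^ d ≤ n.descFactorial d * m ^ d := by
  intro d
  induction d with
  | zero => simp
  | succ d ih =>
    intro m n hmn
    rw [Nat.descFactorial_succ, Nat.descFactorial_succ, pow_succ, pow_succ]
    have h1 : (m - d) * n ≤ (n - d) * m := by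
      rw [Nat.sub_mul, Nat.sub_mul]
      calc m * n - d * n ≤ m * n - d * m :=
            Nat.sub_le_sub_left (Nat.mul_le_mul le_rfl hmn) _
        _ = n * m - d * m := by rw [Nat.mul_comm]
    calc (m - d) * m.descFactorial d * (n ^ d * n)
        = ((m - d) * n) * (m.descFactorial d * n ^ d) := by ring
      _ ≤ ((n - d) * m) * (n.descFactorial d * m ^ d) :=
          Nat.mul_le_mul h1 (ih m n hmn)
      _ = (n - d) * n.descFactorial d * (m ^ d * m) := by ring

lemma choose_ratio {m n : ℕ} (hmn : m ≤ n) (d : ℕ) :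
    m.choose d * n ^ d ≤ n.choose d * m ^ d := by
  have h := desc_ineq d m n hmn
  rw [Nat.descFactorial_eq_factorial_mul_choose, Nat.descFactorial_eq_factorial_mul_choose,
    mul_assoc, mul_assoc] at h
  exact Nat.le_of_mul_le_mul_left h (Nat.factorial_pos d)

lemma key_count {n d m : ℕ} (hdm : d ≤ m) (hmn : m ≤ n) (hn : 0 < n)
    (hnm : n * m ^ d ≤ (n - m) * n ^ d) :
    n * (n - d).choose (m - d) ≤ (n - m) * n.choose m := by
  have hid : n.choose m * m.choose d = n.choose d * (n - d).choose (m - d) :=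
    Nat.choose_mul hdm
  have hc : 0 < n.choose d := Nat.choose_pos (hdm.trans hmn)
  have h1 : n * m.choose d * n ^ d ≤ (n - m) * n.choose d * n ^ d := by
    calc n * m.choose d * n ^ d = n * (m.choose d * n ^ d) := by ring
      _ ≤ n * (n.choose d * m ^ d) := Nat.mul_le_mul le_rfl (choose_ratio hmn d)
      _ = n.choose d * (n * m ^ d) := by ring
      _ ≤ n.choose d * ((n - m) * n ^ d) := Nat.mul_le_mul le_rfl hnm
      _ = (n - m) * n.choose d * n ^ d := by ring
  have h2 : n * m.choose d ≤ (n - m) * n.choose d :=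
    Nat.le_of_mul_le_mul_right h1 (Nat.pow_pos (n := d) hn)
  have h3 : n * ((n - d).choose (m - d)) * n.choose d ≤ (n - m) * n.choose m * n.choose d := by
    calc n * (n - d).choose (m - d) * n.choose d
        = n * (n.choose d * (n - d).choose (m - d)) := by ring
      _ = n * (n.choose m * m.choose d) := by rw [hid]
      _ = n.choose m * (n * m.choose d) := by ring
      _ ≤ n.choose m * ((n - m) * n.choose d) := Nat.mul_le_mul le_rfl h2
      _ = (n - m) * n.choose m * n.choose d := by ring
  exact Nat.le_of_mul_le_mul_right h3 hc

/-- if `ξ ∈ (0,1)` satisfies `1 - ξ^Δ ≥ ξ`, then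
`f(n, Δ) ≥ f(⌊ξ n⌋, Δ - 1)`. -/
theorem f_recursion (n Δ : ℕ) (hn : 2 ≤ n) (hΔ : 2 ≤ Δ)
    (ξ : ℝ) (hξ : ξ ∈ Set.Ioo (0 : ℝ) 1) (hξΔ : ξ ≤ 1 - ξ ^ Δ) :
    f (⌊ξ * n⌋₊) (Δ - 1) ≤ f n Δ := by
  classical
  obtain ⟨hξ0, hξ1⟩ := hξ
  have hn0 : 0 < n := by omega
  set m := ⌊ξ * n⌋₊ with hm
  have hmξ : (m : ℝ) ≤ ξ * n := Nat.floor_le (by positivity)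
  have hmnR : (m : ℝ) ≤ (n : ℝ) := by
    refine hmξ.trans ?_
    have : (0 : ℝ) < n := by exact_mod_cast hn0
    nlinarith
  have hmn : m ≤ n := by exact_mod_cast hmnR
  -- the key real inequality, transferred to ℕ
  have hnm : n * m ^ Δ ≤ (n - m) * n ^ Δ := by
    have hcast : ((n - m : ℕ) : ℝ) = (n : ℝ) - m := by
      rw [Nat.cast_sub hmn]
    have hR : (n : ℝ) * (m : ℝ) ^ Δ ≤ ((n - m : ℕ) : ℝ) * (n : ℝ) ^ Δ := by
      rw [hcast]
      have hp : (m : ℝ) ^ Δ ≤ (ξ * n) ^ Δ := by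
        apply pow_le_pow_left₀ (by positivity) hmξ
      have hξΔ' : ξ ^ Δ ≤ 1 - ξ := by linarith
      have hnpos : (0 : ℝ) < n := by exact_mod_cast hn0
      calc (n : ℝ) * (m : ℝ) ^ Δ ≤ n * (ξ * n) ^ Δ := by
            apply mul_le_mul_of_nonneg_left hp (le_of_lt hnpos)
        _ = n * (ξ ^ Δ * n ^ Δ) := by rw [mul_pow]
        _ ≤ n * ((1 - ξ) * n ^ Δ) := by
            apply mul_le_mul_of_nonneg_left _ (le_of_lt hnpos)
            apply mul_le_mul_of_nonneg_right hξΔ' (by positivity)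
        _ = ((n : ℝ) - ξ * n) * n ^ Δ := by ring
        _ ≤ ((n : ℝ) - m) * n ^ Δ := by
            apply mul_le_mul_of_nonneg_right _ (by positivity)
            linarith
    exact_mod_cast hR
  -- neighborhoods in G (for an arbitrary G introduced below)
  refine le_csSup (f_bddAbove n Δ) ?_
  intro G hG
  set N : Fin n → Finset (Fin n) := fun a => univ.filter (fun b => G a b) with hNdef
  have hdegN : ∀ a, (N a).card ≤ Δ := by
    intro a
    rw [← natCard_subtype (fun b => G a b)]
    exact hG a
  set P := Finset.powersetCard m (univ : Finset (Fin n)) with hP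
  have hPne : P.Nonempty := by
    rw [hP, Finset.powersetCard_nonempty]
    simpa using hmn
  set bad : Finset (Fin n) → ℕ :=
    fun S => (univ.filter fun a => Δ ≤ ((N a) ∩ S).card).card with hbad
  -- there is a choice of S with few bad vertices
  have hexS : ∃ S ∈ P, bad S ≤ n - m := by
    by_cases hcase : Δ ≤ m
    · -- counting argument
      have step1 : ∀ a : Fin n,
          (P.filter fun S => Δ ≤ ((N a) ∩ S).card).card ≤ (n - Δ).choose (m - Δ) := by
        intro a
        by_cases hcard : (N a).card = Δ
        · have htarget : ((univ \ N a).powersetCard (m - Δ)).card = (n - Δ).choose (m - Δ) := by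
            rw [Finset.card_powersetCard, Finset.card_sdiff_of_subset (Finset.subset_univ _),
              Finset.card_univ, Fintype.card_fin, hcard]
          rw [← htarget]
          apply Finset.card_le_card_of_injOn (fun S => S \ N a)
          · intro S hS
            simp only [Finset.mem_coe, Finset.mem_filter, hP, Finset.mem_powersetCard] at hS
            obtain ⟨⟨hSsub, hScard⟩, hΔS⟩ := hS
            have hsub : N a ⊆ S := by
              have h1 : ((N a) ∩ S).card ≤ (N a).card :=
                Finset.card_le_card Finset.inter_subset_left
              have h2 : N a ∩ S = N a :=
                Finset.eq_of_subset_of_card_le Finset.inter_subset_left (by omega)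
              intro x hx
              exact (Finset.mem_inter.mp (h2.symm ▸ hx)).2
            rw [Finset.mem_coe, Finset.mem_powersetCard]
            constructor
            · intro x hx
              rw [Finset.mem_sdiff] at hx ⊢
              exact ⟨Finset.mem_univ x, hx.2⟩
            · rw [Finset.card_sdiff_of_subset hsub, hScard, hcard]
          · intro S₁ hS₁ S₂ hS₂ heq
            simp only [Finset.coe_filter, Set.mem_setOf_eq, hP,
              Finset.mem_powersetCard] at hS₁ hS₂
            have hsub₁ : N a ⊆ S₁ := by
              have h1 : ((N a) ∩ S₁).card ≤ (N a).card :=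
                Finset.card_le_card Finset.inter_subset_left
              have h2 : N a ∩ S₁ = N a :=
                Finset.eq_of_subset_of_card_le Finset.inter_subset_left (by omega)
              intro x hx
              exact (Finset.mem_inter.mp (h2.symm ▸ hx)).2
            have hsub₂ : N a ⊆ S₂ := by
              have h1 : ((N a) ∩ S₂).card ≤ (N a).card :=
                Finset.card_le_card Finset.inter_subset_left
              have h2 : N a ∩ S₂ = N a :=
                Finset.eq_of_subset_of_card_le Finset.inter_subset_left (by omega)
              intro x hx
              exact (Finset.mem_inter.mp (h2.symm ▸ hx)).2
            calc S₁ = S₁ \ N a ∪ N a := (Finset.sdiff_union_of_subset hsub₁).symm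
              _ = S₂ \ N a ∪ N a := by
                  rw [show S₁ \ N a = S₂ \ N a from heq]
              _ = S₂ := Finset.sdiff_union_of_subset hsub₂
        · -- (N a).card < Δ, so the filter is empty
          have hlt : (N a).card < Δ := lt_of_le_of_ne (hdegN a) hcard
          have : (P.filter fun S => Δ ≤ ((N a) ∩ S).card) = ∅ := by
            rw [Finset.filter_eq_empty_iff]
            intro S _
            have h1 : ((N a) ∩ S).card ≤ (N a).card :=
              Finset.card_le_card Finset.inter_subset_left
            omega
          rw [this]
          simp
      have hsum : ∑ S ∈ P, bad S ≤ ∑ S ∈ P, (n - m) := by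
        calc ∑ S ∈ P, bad S
            = ∑ S ∈ P, ∑ a : Fin n, (if Δ ≤ ((N a) ∩ S).card then 1 else 0) := by
              refine Finset.sum_congr rfl fun S _ => ?_
              show (univ.filter fun a => Δ ≤ ((N a) ∩ S).card).card = _
              rw [Finset.card_filter]
          _ = ∑ a : Fin n, ∑ S ∈ P, (if Δ ≤ ((N a) ∩ S).card then 1 else 0) :=
              Finset.sum_comm
          _ = ∑ a : Fin n, (P.filter fun S => Δ ≤ ((N a) ∩ S).card).card := by
              apply Finset.sum_congr rfl
              intro a _
              rw [Finset.card_filter]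
          _ ≤ ∑ _a : Fin n, (n - Δ).choose (m - Δ) :=
              Finset.sum_le_sum fun a _ => step1 a
          _ = n * (n - Δ).choose (m - Δ) := by
              rw [Finset.sum_const, Finset.card_univ, Fintype.card_fin, smul_eq_mul]
          _ ≤ (n - m) * n.choose m := key_count hcase hmn hn0 hnm
          _ = ∑ _S ∈ P, (n - m) := by
              rw [Finset.sum_const, smul_eq_mul, hP, Finset.card_powersetCard,
                Finset.card_univ, Fintype.card_fin, mul_comm]
      obtain ⟨S, hSP, hle⟩ := Finset.exists_le_of_sum_le hPne hsum
      exact ⟨S, hSP, hle⟩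
    · -- m < Δ: no vertex can have Δ neighbours inside S
      obtain ⟨S, hSP⟩ := hPne
      refine ⟨S, hSP, ?_⟩
      have hScard : S.card = m := (Finset.mem_powersetCard.mp hSP).2
      have : bad S = 0 := by
        rw [hbad]
        rw [Finset.card_eq_zero, Finset.filter_eq_empty_iff]
        intro a _
        have h1 : ((N a) ∩ S).card ≤ S.card :=
          Finset.card_le_card Finset.inter_subset_right
        omega
      omega
  obtain ⟨S, hSP, hSbad⟩ := hexS
  have hScard : S.card = m := (Finset.mem_powersetCard.mp hSP).2
  -- the set of good vertices has size ≥ m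
  have hgood : m ≤ (univ.filter fun a => ((N a) ∩ S).card ≤ Δ - 1).card := by
    have hsplit := Finset.card_filter_add_card_filter_not
      (s := (univ : Finset (Fin n))) (p := fun a => Δ ≤ ((N a) ∩ S).card)
    have heq : (univ.filter fun a => ¬ Δ ≤ ((N a) ∩ S).card)
        = (univ.filter fun a => ((N a) ∩ S).card ≤ Δ - 1) :=
      Finset.filter_congr fun a _ => by constructor <;> intro h <;> omega
    rw [heq] at hsplit
    rw [Finset.card_univ, Fintype.card_fin] at hsplit
    have hbadle : (univ.filter fun a => Δ ≤ ((N a) ∩ S).card).card ≤ n - m := hSbad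
    omega
  obtain ⟨A, hAsub, hAcard⟩ :=
    Finset.exists_subset_card_eq (s := univ.filter fun a => ((N a) ∩ S).card ≤ Δ - 1) hgood
  -- build the m × m graph
  have eA : {x // x ∈ A} ≃ Fin m := Finset.equivFinOfCardEq hAcard
  have eS : {x // x ∈ S} ≃ Fin m := Finset.equivFinOfCardEq hScard
  set G' : Fin m → Fin m → Prop :=
    fun i j => G (eA.symm i : Fin n) (eS.symm j : Fin n) with hG'
  have hdeg' : ∀ i, degA G' i ≤ Δ - 1 := by
    intro i
    set a : Fin n := (eA.symm i : Fin n) with ha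
    have haA : a ∈ A := (eA.symm i).2
    have haprop : ((N a) ∩ S).card ≤ Δ - 1 := by
      have := hAsub haA
      rw [Finset.mem_filter] at this
      exact this.2
    have hdcomp : degA G' i = (univ.filter fun j => G a (eS.symm j : Fin n)).card :=
      natCard_subtype _
    rw [hdcomp]
    refine le_trans (Finset.card_le_card_of_injOn
      (fun j => (eS.symm j : Fin n)) ?_ ?_) haprop
    · intro j hj
      rw [Finset.mem_coe, Finset.mem_filter] at hj
      rw [Finset.mem_coe, Finset.mem_inter]
      constructor
      · rw [hNdef]
        simp only [Finset.mem_filter, Finset.mem_univ, true_and]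
        exact hj.2
      · exact (eS.symm j).2
    · intro j₁ _ j₂ _ heq
      have : eS.symm j₁ = eS.symm j₂ := Subtype.ext heq
      exact eS.symm.injective this
  -- apply the inductive bi-hole
  obtain ⟨X', Y', hX', hY', hXY'⟩ := f_spec m (Δ - 1) G' hdeg'
  have hinjA : Function.Injective (fun i : Fin m => (eA.symm i : Fin n)) := by
    intro i₁ i₂ h
    exact eA.symm.injective (Subtype.ext h)
  have hinjS : Function.Injective (fun j : Fin m => (eS.symm j : Fin n)) := by
    intro j₁ j₂ h
    exact eS.symm.injective (Subtype.ext h)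
  refine ⟨X'.image (fun i => (eA.symm i : Fin n)),
    Y'.image (fun j => (eS.symm j : Fin n)), ?_, ?_, ?_⟩
  · rw [Finset.card_image_of_injective _ hinjA, hX']
  · rw [Finset.card_image_of_injective _ hinjS, hY']
  · intro a ha b hb
    rw [Finset.mem_image] at ha hb
    obtain ⟨i, hi, rfl⟩ := ha
    obtain ⟨j, hj, rfl⟩ := hb
    exact hXY' i hi j hj
end

section
/- Let G be a bipartite graph with parts A, B of size n each, where every vertex in A has degree at most Δ. If S ⊆ B and T ⊆ A is the set of vertices of A with at least Δ - 2 neighbors in S, then every vertex of T has at most 2 neighbors in B \ S; consequently, if |T| ≥ |B \ S| = m, then G contains a bi-hole of size ⌈m/2⌉ - 1. -/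
open Finset

section aux
variable {V : Type*} {α : Type*} [DecidableEq V] [DecidableEq α]

lemma pair_eq_pair_cases {a b c d : V} (hab : a ≠ b) (h : ({a, b} : Finset V) = {c, d}) :
    (a = c ∧ b = d) ∨ (a = d ∧ b = c) := by
  have ha : a ∈ ({c, d} : Finset V) := h ▸ mem_insert_self a {b}
  have hb : b ∈ ({c, d} : Finset V) := h ▸ mem_insert_of_mem (mem_singleton_self b)
  have hc : c ∈ ({a, b} : Finset V) := h ▸ mem_insert_self c {d}
  have hd : d ∈ ({a, b} : Finset V) := h ▸ mem_insert_of_mem (mem_singleton_self d)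
  simp only [mem_insert, mem_singleton] at ha hb hc hd
  rcases ha with rfl | rfl
  · rcases hb with rfl | rfl
    · rcases hd with rfl | rfl
      · exact absurd rfl hab
      · exact Or.inl ⟨rfl, rfl⟩
    · exact Or.inl ⟨rfl, rfl⟩
  · rcases hb with rfl | rfl
    · exact Or.inr ⟨rfl, rfl⟩
    · rcases hc with rfl | rfl
      · exact Or.inr ⟨rfl, rfl⟩
      · exact absurd rfl hab

lemma exists_cycle (B' : Finset V) (T : Finset α) (N : α → Finset V)
    (hsub : ∀ a ∈ T, N a ⊆ B') (h2 : ∀ a ∈ T, (N a).card = 2)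
    (hD : ∀ b ∈ B', 2 ≤ (T.filter fun a => b ∈ N a).card)
    (hne : B'.Nonempty) :
    ∃ (L : ℕ) (bs : ℕ → V) (as : ℕ → α), 2 ≤ L ∧
      (∀ i, i ≤ L → bs i ∈ B') ∧ (∀ i, i < L → as i ∈ T) ∧
      bs L = bs 0 ∧
      (∀ i, i < L → N (as i) = {bs i, bs (i + 1)}) ∧
      (∀ i j, i < L → j < L → bs i = bs j → i = j) ∧
      (∀ i j, i < L → j < L → as i = as j → i = j) := by
  classical
  obtain ⟨b₀, hb₀⟩ := hne
  have hTne : ∃ a, a ∈ T := by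
    have h1 := hD b₀ hb₀
    have h2' : (T.filter fun a => b₀ ∈ N a).Nonempty := card_pos.mp (by omega)
    obtain ⟨a, ha⟩ := h2'
    exact ⟨a, (mem_filter.mp ha).1⟩
  obtain ⟨adum, _⟩ := hTne
  -- step function
  have key : ∀ p : V × α, ∃ q : V × α, p.1 ∈ B' →
      q.2 ∈ T ∧ q.2 ≠ p.2 ∧ N q.2 = {p.1, q.1} ∧ p.1 ≠ q.1 ∧ q.1 ∈ B' := by
    rintro ⟨b, a₀⟩
    by_cases hb : b ∈ B'
    · have hcard := hD b hb
      obtain ⟨x, hx, y, hy, hxy⟩ := one_lt_card.mp (lt_of_lt_of_le one_lt_two hcard)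
      obtain ⟨a, haT, hba, hne'⟩ : ∃ a, a ∈ T ∧ b ∈ N a ∧ a ≠ a₀ := by
        rcases eq_or_ne x a₀ with rfl | hxa
        · exact ⟨y, (mem_filter.mp hy).1, (mem_filter.mp hy).2, fun h => hxy h.symm⟩
        · exact ⟨x, (mem_filter.mp hx).1, (mem_filter.mp hx).2, hxa⟩
      obtain ⟨u, v, huv, hNa⟩ := card_eq_two.mp (h2 a haT)
      have hbmem : b ∈ ({u, v} : Finset V) := hNa ▸ hba
      have hb' : ∃ b', b ≠ b' ∧ N a = {b, b'} := by
        rcases mem_insert.mp hbmem with h | h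
        · exact ⟨v, by rw [h]; exact huv, by rw [hNa, h]⟩
        · rw [mem_singleton] at h
          exact ⟨u, by rw [h]; exact fun e => huv e.symm, by rw [hNa, h, pair_comm]⟩
      obtain ⟨b', hbb', hNb⟩ := hb'
      refine ⟨(b', a), fun _ => ⟨haT, hne', hNb, hbb', ?_⟩⟩
      exact hsub a haT (hNb ▸ mem_insert_of_mem (mem_singleton_self b'))
    · exact ⟨(b, a₀), fun h => absurd h hb⟩
  choose f hf using key
  let seq : ℕ → V × α := fun i => Nat.rec (b₀, adum) (fun _ p => f p) i
  have hseq_succ : ∀ i, seq (i + 1) = f (seq i) := fun i => rfl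
  let bs : ℕ → V := fun i => (seq i).1
  let asq : ℕ → α := fun i => (seq (i + 1)).2
  have hmem : ∀ i, bs i ∈ B' := by
    intro i
    induction i with
    | zero => exact hb₀
    | succ n ih => exact (hf (seq n) ih).2.2.2.2
  have hinv : ∀ i, asq i ∈ T ∧ N (asq i) = {bs i, bs (i + 1)} ∧ bs i ≠ bs (i + 1) ∧
      asq (i + 1) ≠ asq i := by
    intro i
    have h1 := hf (seq i) (hmem i)
    have h2' := hf (seq (i + 1)) (hmem (i + 1))
    exact ⟨h1.1, h1.2.2.1, h1.2.2.2.1, h2'.2.1⟩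
  -- pigeonhole
  obtain ⟨i1, hi1, j1, hj1, hij1, heq1⟩ :=
    exists_ne_map_eq_of_card_lt_of_maps_to (s := range (B'.card + 1)) (t := B')
      (by simp) (fun i _ => hmem i)
  have hex : ∃ j, ∃ i, i < j ∧ bs i = bs j := by
    rcases lt_or_gt_of_ne hij1 with h | h
    · exact ⟨j1, i1, h, heq1⟩
    · exact ⟨i1, j1, h, heq1.symm⟩
  set j₀ := Nat.find hex with hj₀
  obtain ⟨i₀, hi₀lt, hi₀eq⟩ := Nat.find_spec hex
  have hmin : ∀ p q, p < q → q < j₀ → bs p = bs q → False := by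
    intro p q hpq hq hpeq
    exact Nat.find_min hex hq ⟨p, hpq, hpeq⟩
  have huniq : ∀ x, x < j₀ → bs x = bs j₀ → x = i₀ := by
    intro x hx hxeq
    rcases Nat.lt_trichotomy x i₀ with h | h | h
    · exact absurd (hxeq.trans hi₀eq.symm) (fun e => hmin x i₀ h hi₀lt e)
    · exact h
    · exact absurd (hi₀eq.trans hxeq.symm) (fun e => hmin i₀ x h hx e)
  set L := j₀ - i₀ with hL
  have hL1 : 1 ≤ L := by omega
  have hL2 : 2 ≤ L := by
    rcases Nat.lt_or_ge L 2 with h | h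
    · have : j₀ = i₀ + 1 := by omega
      exact absurd (this ▸ hi₀eq) (hinv i₀).2.2.1
    · exact h
  refine ⟨L, fun k => bs (i₀ + k), fun k => asq (i₀ + k), hL2, fun i _ => hmem _,
    fun i _ => (hinv _).1, ?_, fun i _ => by
      have := (hinv (i₀ + i)).2.1
      rwa [show i₀ + i + 1 = i₀ + (i + 1) by omega] at this, ?_, ?_⟩
  · show bs (i₀ + L) = bs (i₀ + 0)
    rw [show i₀ + L = j₀ by omega, Nat.add_zero]
    exact hi₀eq.symm
  · -- injectivity of bs on [0, L)
    intro p q hp hq hpq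
    by_contra hne'
    rcases Nat.lt_trichotomy p q with h | h | h
    · exact hmin (i₀ + p) (i₀ + q) (by omega) (by omega) hpq
    · exact hne' h
    · exact hmin (i₀ + q) (i₀ + p) (by omega) (by omega) hpq.symm
  · -- injectivity of as on [0, L)
    have hBSw : ∀ p q, p ≤ L → q ≤ L → bs (i₀ + p) = bs (i₀ + q) →
        p = q ∨ (p = 0 ∧ q = L) ∨ (p = L ∧ q = 0) := by
      intro p q hp hq hpq
      rcases Nat.lt_or_ge p L with h1 | h1
      · rcases Nat.lt_or_ge q L with h2 | h2
        · -- both < L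
          rcases Nat.lt_trichotomy p q with h | h | h
          · exact absurd hpq (fun e => hmin _ _ (by omega) (by omega) e)
          · exact Or.inl h
          · exact absurd hpq.symm (fun e => hmin _ _ (by omega) (by omega) e)
        · -- q = L
          have hq' : q = L := by omega
          subst hq'
          have : bs (i₀ + p) = bs j₀ := by rwa [show i₀ + L = j₀ by omega] at hpq
          have := huniq (i₀ + p) (by omega) this
          right; left; constructor <;> omega
      · -- p = L
        have hp' : p = L := by omega
        subst hp'
        rcases Nat.lt_or_ge q L with h2 | h2
        · have : bs (i₀ + q) = bs j₀ := by
            rw [show i₀ + L = j₀ by omega] at hpq; exact hpq.symm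
          have := huniq (i₀ + q) (by omega) this
          right; right; constructor <;> omega
        · left; omega
    have main : ∀ p q, p < q → q < L → asq (i₀ + p) = asq (i₀ + q) → False := by
      intro p q hpq hq haeq
      have e1 := (hinv (i₀ + p)).2.1
      have e2 := (hinv (i₀ + q)).2.1
      rw [haeq, e2] at e1
      have hne1 : bs (i₀ + p) ≠ bs (i₀ + p + 1) := (hinv (i₀ + p)).2.2.1
      rcases pair_eq_pair_cases hne1 e1.symm with ⟨h1, h2⟩ | ⟨h1, h2⟩
      · rw [show i₀ + p + 1 = i₀ + (p+1) by omega, show i₀ + q + 1 = i₀ + (q+1) by omega] at h2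
        rcases hBSw p q (by omega) (by omega) h1 with h | ⟨h, h'⟩ | ⟨h, h'⟩ <;> omega
      · rw [show i₀ + q + 1 = i₀ + (q+1) by omega] at h1
        rw [show i₀ + p + 1 = i₀ + (p+1) by omega] at h2
        rcases hBSw p (q+1) (by omega) (by omega) h1 with h | ⟨h, h'⟩ | ⟨h, h'⟩
        · omega
        · -- p = 0, q + 1 = L
          rcases hBSw (p+1) q (by omega) (by omega) h2 with h3 | ⟨h3, h3'⟩ | ⟨h3, h3'⟩
          · -- p + 1 = q, so q = 1, L = 2, p = 0: consecutive edges equal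
            have hL2' : L = 2 := by omega
            have hp0 : p = 0 := h
            have hq1 : q = 1 := by omega
            have := (hinv (i₀ + p)).2.2.2
            rw [show i₀ + p + 1 = i₀ + q by omega] at this
            exact this haeq.symm
          · omega
          · omega
        · omega
    intro p q hp hq hpq
    by_contra hne'
    rcases Nat.lt_trichotomy p q with h | h | h
    · exact main p q h hq hpq
    · exact hne' h
    · exact main q p h hp hpq.symm


lemma cover_lemma (k : ℕ) : ∀ (B' : Finset V) (T : Finset α) (N : α → Finset V),
    B'.card + T.card ≤ k → (∀ a ∈ T, N a ⊆ B') → (∀ a ∈ T, (N a).card ≤ 2) →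
    ∀ c, c ≤ B'.card → ∃ C, C ⊆ B' ∧ C.card ≤ c ∧
      c ≤ (T.filter fun a => N a ⊆ C).card + (B'.card - T.card) + 1 := by
  induction k with
  | zero =>
    intro B' T N hfuel hsub hdeg c hc
    exact ⟨∅, empty_subset _, by simp, by omega⟩
  | succ k ih =>
    intro B' T N hfuel hsub hdeg c hc
    by_cases hc1 : c ≤ 1
    · exact ⟨∅, empty_subset _, by simp, by omega⟩
    push_neg at hc1
    by_cases htw : T.card < B'.card
    · -- t < w: pick any b ∈ B'
      have hBne : B'.Nonempty := card_pos.mp (by omega)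
      obtain ⟨b, hb⟩ := hBne
      obtain ⟨C'', hC''sub, hC''card, hC''cov⟩ := ih (B'.erase b) T (fun a => (N a).erase b)
        (by rw [card_erase_of_mem hb]; omega)
        (fun a ha => erase_subset_erase b (hsub a ha))
        (fun a ha => le_trans card_erase_le (hdeg a ha))
        (c - 1) (by rw [card_erase_of_mem hb]; omega)
      refine ⟨insert b C'', insert_subset hb (hC''sub.trans (erase_subset b B')),
        le_trans (card_insert_le _ _) (by omega), ?_⟩
      have hmono : (T.filter fun a => (N a).erase b ⊆ C'') ⊆
          (T.filter fun a => N a ⊆ insert b C'') := by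
        apply monotone_filter_right
        intro a _ ha x hx
        rcases eq_or_ne x b with rfl | hxb
        · exact mem_insert_self _ _
        · exact mem_insert_of_mem (ha (mem_erase.mpr ⟨hxb, hx⟩))
      have hcard := card_le_card hmono
      rw [card_erase_of_mem hb] at hC''cov
      omega
    · -- w ≤ t
      by_cases hcw : c = B'.card
      · refine ⟨B', subset_rfl, le_of_eq hcw.symm, ?_⟩
        rw [filter_true_of_mem hsub]
        omega
      have hcw' : c < B'.card := by omega
      by_cases htw2 : B'.card < T.card
      · -- t > w : drop an arbitrary a₀
        have hTne : T.Nonempty := card_pos.mp (by omega)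
        obtain ⟨a₀, ha₀⟩ := hTne
        obtain ⟨C'', h1, h2, h3⟩ := ih B' (T.erase a₀) N
          (by rw [card_erase_of_mem ha₀]; omega)
          (fun a ha => hsub a (mem_of_mem_erase ha))
          (fun a ha => hdeg a (mem_of_mem_erase ha)) c hc
        refine ⟨C'', h1, h2, ?_⟩
        have := card_le_card (filter_subset_filter (fun a => N a ⊆ C'') (erase_subset a₀ T))
        rw [card_erase_of_mem ha₀] at h3
        omega
      -- now t = w
      by_cases hB1 : ∃ a₀ ∈ T, (N a₀).card = 0
      · obtain ⟨a₀, ha₀, hN0⟩ := hB1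
        rw [card_eq_zero] at hN0
        obtain ⟨C'', h1, h2, h3⟩ := ih B' (T.erase a₀) N
          (by rw [card_erase_of_mem ha₀]; omega)
          (fun a ha => hsub a (mem_of_mem_erase ha))
          (fun a ha => hdeg a (mem_of_mem_erase ha)) c hc
        refine ⟨C'', h1, h2, ?_⟩
        have hins : insert a₀ ((T.erase a₀).filter fun a => N a ⊆ C'') ⊆
            T.filter fun a => N a ⊆ C'' := by
          intro x hx
          rcases mem_insert.mp hx with rfl | hx'
          · exact mem_filter.mpr ⟨ha₀, by rw [hN0]; exact empty_subset _⟩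
          · exact filter_subset_filter (fun a => N a ⊆ C'') (erase_subset a₀ T) hx'
        have hcard := card_le_card hins
        rw [card_insert_of_notMem (fun hmem => (mem_erase.mp (mem_filter.mp hmem).1).1 rfl)]
          at hcard
        rw [card_erase_of_mem ha₀] at h3
        omega
      by_cases hB2 : ∃ a₀ ∈ T, (N a₀).card = 1
      · obtain ⟨a₀, ha₀, hN1⟩ := hB2
        obtain ⟨b, hNb⟩ := card_eq_one.mp hN1
        have hbB : b ∈ B' := hsub a₀ ha₀ (hNb ▸ mem_singleton_self b)
        obtain ⟨C'', h1, h2, h3⟩ := ih (B'.erase b) (T.erase a₀) (fun a => (N a).erase b)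
          (by rw [card_erase_of_mem hbB, card_erase_of_mem ha₀]; omega)
          (fun a ha => erase_subset_erase b (hsub a (mem_of_mem_erase ha)))
          (fun a ha => le_trans card_erase_le (hdeg a (mem_of_mem_erase ha)))
          (c - 1) (by rw [card_erase_of_mem hbB]; omega)
        refine ⟨insert b C'', insert_subset hbB (h1.trans (erase_subset b B')),
          le_trans (card_insert_le _ _) (by omega), ?_⟩
        have hins : insert a₀ ((T.erase a₀).filter fun a => (N a).erase b ⊆ C'') ⊆
            T.filter fun a => N a ⊆ insert b C'' := by
          intro x hx
          rcases mem_insert.mp hx with rfl | hx'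
          · exact mem_filter.mpr ⟨ha₀, by
              rw [hNb]; exact singleton_subset_iff.mpr (mem_insert_self b C'')⟩
          · obtain ⟨hxT, hxs⟩ := mem_filter.mp hx'
            refine mem_filter.mpr ⟨mem_of_mem_erase hxT, ?_⟩
            intro y hy
            rcases eq_or_ne y b with rfl | hyb
            · exact mem_insert_self _ _
            · exact mem_insert_of_mem (hxs (mem_erase.mpr ⟨hyb, hy⟩))
        have hcard := card_le_card hins
        rw [card_insert_of_notMem (fun hmem => (mem_erase.mp (mem_filter.mp hmem).1).1 rfl)]
          at hcard
        rw [card_erase_of_mem hbB, card_erase_of_mem ha₀] at h3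
        omega
      -- all degrees are exactly 2
      have hall2 : ∀ a ∈ T, (N a).card = 2 := by
        intro a ha
        have h := hdeg a ha
        rcases Nat.lt_or_ge (N a).card 2 with h' | h'
        · rcases Nat.lt_or_ge (N a).card 1 with h'' | h''
          · exact absurd ⟨a, ha, by omega⟩ hB1
          · exact absurd ⟨a, ha, by omega⟩ hB2
        · omega
      by_cases hB3a : ∃ b ∈ B', (T.filter fun a => b ∈ N a).card ≤ 1
      · obtain ⟨b, hbB, hDb⟩ := hB3a
        rcases Nat.eq_zero_or_pos (T.filter fun a => b ∈ N a).card with hD0 | hD1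
        · -- D(b) = 0
          have hbnot : ∀ a ∈ T, b ∉ N a := by
            intro a ha hmem
            have hm : a ∈ T.filter fun a => b ∈ N a := mem_filter.mpr ⟨ha, hmem⟩
            rw [card_eq_zero] at hD0
            rw [hD0] at hm
            exact notMem_empty a hm
          obtain ⟨C'', h1, h2, h3⟩ := ih (B'.erase b) T N
            (by rw [card_erase_of_mem hbB]; omega)
            (fun a ha => subset_erase.mpr ⟨hsub a ha, hbnot a ha⟩)
            hdeg c (by rw [card_erase_of_mem hbB]; omega)
          refine ⟨C'', h1.trans (erase_subset b B'), h2, ?_⟩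
          rw [card_erase_of_mem hbB] at h3
          omega
        · -- D(b) = 1
          have hD1' : (T.filter fun a => b ∈ N a).card = 1 := le_antisymm hDb hD1
          obtain ⟨a₁, ha₁⟩ := card_eq_one.mp hD1'
          have ha₁T : a₁ ∈ T := (mem_filter.mp (ha₁ ▸ mem_singleton_self a₁)).1
          have hbnot : ∀ a ∈ T.erase a₁, b ∉ N a := by
            intro a ha hmem
            have hm : a ∈ T.filter fun a => b ∈ N a :=
              mem_filter.mpr ⟨mem_of_mem_erase ha, hmem⟩
            rw [ha₁] at hm
            exact (mem_erase.mp ha).1 (mem_singleton.mp hm)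
          obtain ⟨C'', h1, h2, h3⟩ := ih (B'.erase b) (T.erase a₁) N
            (by rw [card_erase_of_mem hbB, card_erase_of_mem ha₁T]; omega)
            (fun a ha => subset_erase.mpr ⟨hsub a (mem_of_mem_erase ha), hbnot a ha⟩)
            (fun a ha => hdeg a (mem_of_mem_erase ha))
            c (by rw [card_erase_of_mem hbB]; omega)
          refine ⟨C'', h1.trans (erase_subset b B'), h2, ?_⟩
          have := card_le_card (filter_subset_filter (fun a => N a ⊆ C'') (erase_subset a₁ T))
          rw [card_erase_of_mem hbB, card_erase_of_mem ha₁T] at h3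
          omega
      -- every vertex has degree ≥ 2 : use the cycle
      push_neg at hB3a
      have hBne : B'.Nonempty := card_pos.mp (by omega)
      obtain ⟨L, bs, as, hL2, hbsB, hasT, hbsL0, hNas, hbsinj, hasinj⟩ :=
        exists_cycle B' T N hsub hall2 (fun b hb => hB3a b hb) hBne
      rcases Nat.lt_or_ge c L with hcL | hcL
      · -- c < L : take a path prefix
        refine ⟨(range c).image bs, ?_, le_trans card_image_le (by simp), ?_⟩
        · intro x hx
          obtain ⟨i, hi, rfl⟩ := mem_image.mp hx
          rw [mem_range] at hi
          exact hbsB i (by omega)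
        · have hsubf : (range (c - 1)).image as ⊆
              T.filter fun a => N a ⊆ (range c).image bs := by
            intro x hx
            obtain ⟨i, hi, rfl⟩ := mem_image.mp hx
            rw [mem_range] at hi
            refine mem_filter.mpr ⟨hasT i (by omega), ?_⟩
            rw [hNas i (by omega)]
            intro y hy
            rcases mem_insert.mp hy with rfl | hy'
            · exact mem_image.mpr ⟨i, mem_range.mpr (by omega), rfl⟩
            · rw [mem_singleton] at hy'
              exact hy' ▸ mem_image.mpr ⟨i + 1, mem_range.mpr (by omega), rfl⟩
          have hcard := card_le_card hsubf
          have himg : ((range (c - 1)).image as).card = c - 1 := by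
            rw [card_image_of_injOn, card_range]
            intro p hp q hq hpq
            simp only [mem_coe, mem_range] at hp hq
            exact hasinj p q (by omega) (by omega) hpq
          omega
      · -- L ≤ c : remove the cycle and recurse
        set C₀ := (range L).image bs with hC₀
        set A₀ := (range L).image as with hA₀
        have hC₀sub : C₀ ⊆ B' := by
          intro x hx
          obtain ⟨i, hi, rfl⟩ := mem_image.mp hx
          exact hbsB i (le_of_lt (mem_range.mp hi))
        have hA₀sub : A₀ ⊆ T := by
          intro x hx
          obtain ⟨i, hi, rfl⟩ := mem_image.mp hx
          exact hasT i (mem_range.mp hi)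
        have hC₀card : C₀.card = L := by
          rw [hC₀, card_image_of_injOn, card_range]
          intro p hp q hq hpq
          simp only [mem_coe, mem_range] at hp hq
          exact hbsinj p q hp hq hpq
        have hA₀card : A₀.card = L := by
          rw [hA₀, card_image_of_injOn, card_range]
          intro p hp q hq hpq
          simp only [mem_coe, mem_range] at hp hq
          exact hasinj p q hp hq hpq
        have hNsubC₀ : ∀ a ∈ A₀, N a ⊆ C₀ := by
          intro a ha
          obtain ⟨i, hi, rfl⟩ := mem_image.mp ha
          rw [mem_range] at hi
          rw [hNas i hi]
          intro y hy
          rcases mem_insert.mp hy with rfl | hy'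
          · exact mem_image.mpr ⟨i, mem_range.mpr hi, rfl⟩
          · rw [mem_singleton] at hy'
            subst hy'
            rcases Nat.lt_or_ge (i + 1) L with h | h
            · exact mem_image.mpr ⟨i + 1, mem_range.mpr h, rfl⟩
            · have hiL : i + 1 = L := by omega
              rw [hiL, hbsL0]
              exact mem_image.mpr ⟨0, mem_range.mpr (by omega), rfl⟩
        obtain ⟨C'', h1, h2, h3⟩ := ih (B' \ C₀) (T \ A₀) (fun a => N a \ C₀)
          (by rw [card_sdiff_of_subset hC₀sub, card_sdiff_of_subset hA₀sub, hC₀card, hA₀card]; omega)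
          (fun a ha => sdiff_subset_sdiff (hsub a (mem_sdiff.mp ha).1) subset_rfl)
          (fun a ha => le_trans (card_le_card sdiff_subset) (hdeg a (mem_sdiff.mp ha).1))
          (c - L) (by rw [card_sdiff_of_subset hC₀sub, hC₀card]; omega)
        refine ⟨C'' ∪ C₀, union_subset (h1.trans sdiff_subset) hC₀sub,
          le_trans (card_union_le _ _) (by omega), ?_⟩
        have hbig : A₀ ∪ ((T \ A₀).filter fun a => N a \ C₀ ⊆ C'') ⊆
            T.filter fun a => N a ⊆ C'' ∪ C₀ := by
          intro x hx
          rcases mem_union.mp hx with hx' | hx'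
          · exact mem_filter.mpr ⟨hA₀sub hx', (hNsubC₀ x hx').trans subset_union_right⟩
          · obtain ⟨hxT, hxs⟩ := mem_filter.mp hx'
            refine mem_filter.mpr ⟨(mem_sdiff.mp hxT).1, ?_⟩
            intro y hy
            by_cases hyC : y ∈ C₀
            · exact mem_union_right _ hyC
            · exact mem_union_left _ (hxs (mem_sdiff.mpr ⟨hy, hyC⟩))
        have hdisj : Disjoint A₀ ((T \ A₀).filter fun a => N a \ C₀ ⊆ C'') := by
          rw [Finset.disjoint_left]
          intro x hx hx'
          exact (mem_sdiff.mp (mem_filter.mp hx').1).2 hx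
        have hcard := card_le_card hbig
        rw [card_union_of_disjoint hdisj, hA₀card] at hcard
        rw [card_sdiff_of_subset hC₀sub, card_sdiff_of_subset hA₀sub, hC₀card, hA₀card] at h3
        omega

end aux

/-- Number of neighbors of `a` inside the set `S ⊆ B`. -/
noncomputable def degIn {n : ℕ} (G : Fin n → Fin n → Prop)
    (S : Finset (Fin n)) (a : Fin n) : ℕ :=
  Nat.card {b : Fin n // b ∈ S ∧ G a b}

/-- if every vertex of `A` has degree at most `Δ`, `S ⊆ B`, and
`T` is the set of vertices of `A` with at least `Δ - 2` neighbors in `S`, then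
every vertex of `T` has at most `2` neighbors in `B \ S`; consequently if
`|T| ≥ |B \ S| = m` then `G` has a bi-hole of size `⌈m/2⌉ - 1`. -/
theorem high_degree_into_S (n Δ m : ℕ) (G : Fin n → Fin n → Prop)
    (hdeg : ∀ a, degA G a ≤ Δ) (S : Finset (Fin n)) :
    (∀ a : Fin n, Δ - 2 ≤ degIn G S a →
      Nat.card {b : Fin n // b ∉ S ∧ G a b} ≤ 2) ∧
    (Sᶜ.card = m → m ≤ Nat.card {a : Fin n // Δ - 2 ≤ degIn G S a} →
      BiHole n ((m + 1) / 2 - 1) G) := by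
  classical
  have hpart1 : ∀ a : Fin n, Δ - 2 ≤ degIn G S a →
      Nat.card {b : Fin n // b ∉ S ∧ G a b} ≤ 2 := by
    intro a ha
    have e1 : degIn G S a = (univ.filter fun b => b ∈ S ∧ G a b).card := by
      rw [degIn, Nat.card_eq_fintype_card, Fintype.card_subtype]
    have e2 : Nat.card {b : Fin n // b ∉ S ∧ G a b} =
        (univ.filter fun b => b ∉ S ∧ G a b).card := by
      rw [Nat.card_eq_fintype_card, Fintype.card_subtype]
    have e3 : degA G a = (univ.filter fun b => G a b).card := by
      rw [degA, Nat.card_eq_fintype_card, Fintype.card_subtype]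
    have hsplit : (univ.filter fun b => b ∈ S ∧ G a b).card +
        (univ.filter fun b => b ∉ S ∧ G a b).card = (univ.filter fun b => G a b).card := by
      have h1 : ((univ.filter fun b => G a b).filter fun b => b ∈ S) =
          univ.filter fun b => b ∈ S ∧ G a b := by
        rw [filter_filter]
        apply filter_congr
        intro b _
        exact and_comm
      have h2 : ((univ.filter fun b => G a b).filter fun b => ¬ b ∈ S) =
          univ.filter fun b => b ∉ S ∧ G a b := by
        rw [filter_filter]
        apply filter_congr
        intro b _
        exact and_comm
      rw [← h1, ← h2]
      exact card_filter_add_card_filter_not _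
    have hda := hdeg a
    rw [e3] at hda
    rw [e1] at ha
    rw [e2]
    omega
  refine ⟨hpart1, ?_⟩
  intro hm hT
  set k := (m + 1) / 2 - 1 with hk
  by_cases hk0 : k = 0
  · exact ⟨∅, ∅, by simp [hk0], by simp [hk0], by simp⟩
  have hm3 : 3 ≤ m := by omega
  set T : Finset (Fin n) := univ.filter (fun a => Δ - 2 ≤ degIn G S a) with hTdef
  set N : Fin n → Finset (Fin n) := fun a => univ.filter (fun b => b ∉ S ∧ G a b) with hNdef
  have hTcard : m ≤ T.card := by
    rwa [Nat.card_eq_fintype_card, Fintype.card_subtype] at hT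
  have hNsub : ∀ a ∈ T, N a ⊆ Sᶜ := by
    intro a _ b hb
    simp only [hNdef, mem_filter] at hb
    exact mem_compl.mpr hb.2.1
  have hNcard : ∀ a ∈ T, (N a).card ≤ 2 := by
    intro a ha
    have h := hpart1 a (by simpa [hTdef] using ha)
    rw [Nat.card_eq_fintype_card, Fintype.card_subtype] at h
    exact h
  obtain ⟨C, hCsub, hCcard, hCcov⟩ := cover_lemma (Sᶜ.card + T.card) Sᶜ T N le_rfl
    hNsub hNcard (m - k) (by omega)
  rw [hm] at hCcov
  have hcov : k ≤ (T.filter fun a => N a ⊆ C).card := by omega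
  obtain ⟨X, hXsub, hXcard⟩ := (T.filter fun a => N a ⊆ C).exists_subset_card_eq hcov
  have hYcard' : k ≤ (Sᶜ \ C).card := by
    rw [card_sdiff_of_subset hCsub, hm]
    omega
  obtain ⟨Y, hYsub, hYcard⟩ := (Sᶜ \ C).exists_subset_card_eq hYcard'
  refine ⟨X, Y, hXcard, hYcard, ?_⟩
  intro a haX b hbY hG
  have haC : N a ⊆ C := (mem_filter.mp (hXsub haX)).2
  have hbSC := mem_sdiff.mp (hYsub hbY)
  refine hbSC.2 (haC ?_)
  simp only [hNdef, mem_filter, mem_univ, true_and]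
  exact ⟨mem_compl.mp hbSC.1, hG⟩
end

section
/- For every ε ∈ (0,1) and sufficiently large n, every n × n bipartite graph with at least ε n² edges contains a complete bipartite subgraph K_{t,t} (respecting sides) with t ≥ c·log n, for some constant c depending only on ε. -/
open Filter Real Finset

lemma kst_aux_event (A B : ℝ) (hA : 0 < A) (hB : 0 < B) :
    ∃ N : ℕ, 1 ≤ N ∧ ∀ n : ℕ, N ≤ n → B * Real.log n + 1 ≤ A * Real.sqrt n := by
  have h := isLittleO_log_rpow_atTop (by norm_num : (0:ℝ) < 1/2)
  have hb := h.bound (show (0:ℝ) < A / (2*B) by positivity)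
  have h2 : Tendsto Real.sqrt atTop atTop := by
    have := tendsto_rpow_atTop (by norm_num : (0:ℝ) < 1/2)
    refine this.congr' ?_
    filter_upwards [eventually_ge_atTop (0:ℝ)] with x hx
    rw [Real.sqrt_eq_rpow]
  have h3 : ∀ᶠ x : ℝ in atTop, 2/A ≤ Real.sqrt x := h2.eventually_ge_atTop _
  have h5 : ∀ᶠ x : ℝ in atTop, B * Real.log x + 1 ≤ A * Real.sqrt x := by
    filter_upwards [hb, h3, eventually_ge_atTop (1:ℝ)] with x hx1 hx2 hx3
    have hx0 : (0:ℝ) ≤ x := by linarith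
    have hlog : 0 ≤ Real.log x := Real.log_nonneg hx3
    have hs0 : 0 ≤ Real.sqrt x := Real.sqrt_nonneg x
    rw [Real.norm_eq_abs, Real.norm_eq_abs, abs_of_nonneg hlog,
      abs_of_nonneg (Real.rpow_nonneg hx0 _), ← Real.sqrt_eq_rpow] at hx1
    have hx1' : B * Real.log x ≤ (A/2) * Real.sqrt x := by
      have := mul_le_mul_of_nonneg_left hx1 hB.le
      calc B * Real.log x ≤ B * (A / (2*B) * Real.sqrt x) := this
        _ = (A/2) * Real.sqrt x := by field_simp
    have hx2' : (1:ℝ) ≤ (A/2) * Real.sqrt x := by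
      have := mul_le_mul_of_nonneg_left hx2 (by positivity : (0:ℝ) ≤ A/2)
      calc (1:ℝ) = A/2 * (2/A) := by field_simp
        _ ≤ A/2 * Real.sqrt x := this
    linarith
  obtain ⟨M, hM⟩ := eventually_atTop.mp h5
  refine ⟨⌈M⌉₊ + 1, by omega, fun n hn => hM n ?_⟩
  calc M ≤ ⌈M⌉₊ := Nat.le_ceil M
    _ ≤ n := by exact_mod_cast Nat.le_of_succ_le hn

set_option maxHeartbeats 1600000 in
/-- for every `ε ∈ (0,1)` there is `c > 0` so that for all large
`n`, every `n × n` bipartite graph with at least `ε n²` edges contains a copy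
of `K_{t,t}` respecting sides with `t ≥ c log n`. -/
theorem kst_log (ε : ℝ) (hε : ε ∈ Set.Ioo (0 : ℝ) 1) :
    ∃ c : ℝ, 0 < c ∧ ∃ N : ℕ, ∀ n : ℕ, N ≤ n →
      ∀ G : Fin n → Fin n → Prop,
        ε * (n : ℝ) ^ 2 ≤ (Nat.card {p : Fin n × Fin n // G p.1 p.2} : ℝ) →
        ∃ (t : ℕ) (X Y : Finset (Fin n)),
          c * Real.log n ≤ (t : ℝ) ∧ X.card = t ∧ Y.card = t ∧
          ∀ a ∈ X, ∀ b ∈ Y, G a b := by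
  classical
  obtain ⟨hε0, hε1⟩ := hε
  set L : ℝ := Real.log (4 / ε) with hLdef
  have hL0 : 0 < L := Real.log_pos (by rw [lt_div_iff₀ hε0]; linarith)
  set c : ℝ := 1 / (2 * L) with hcdef
  have hc0 : 0 < c := by positivity
  obtain ⟨N1, _, hN1⟩ := kst_aux_event (ε^2/16) c (by positivity) hc0
  obtain ⟨N2, _, hN2⟩ := kst_aux_event (ε/4) c (by positivity) hc0
  refine ⟨c, hc0, max (max N1 N2) (⌈4/ε⌉₊ + 2), fun n hn G hG => ?_⟩
  -- basic size facts
  have hn1 : N1 ≤ n := le_trans (le_trans (le_max_left _ _) (le_max_left _ _)) hn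
  have hn2 : N2 ≤ n := le_trans (le_trans (le_max_right _ _) (le_max_left _ _)) hn
  have hn4 : ⌈4/ε⌉₊ + 2 ≤ n := le_trans (le_max_right _ _) hn
  have hnpos : 0 < n := by omega
  have hn2' : 2 ≤ n := by omega
  have hxn : (4:ℝ)/ε ≤ n := le_trans (Nat.le_ceil _) (by exact_mod_cast by omega)
  have hεn4 : (4:ℝ) ≤ ε * n := by rw [div_le_iff₀ hε0] at hxn; linarith
  have hnR : (0:ℝ) < n := by exact_mod_cast hnpos
  have hlogpos : 0 < Real.log n := Real.log_pos (by exact_mod_cast hn2')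
  -- the parameter t
  set t : ℕ := ⌈c * Real.log n⌉₊ with htdef
  have ht_log : c * Real.log n ≤ (t:ℝ) := Nat.le_ceil _
  have ht1 : 1 ≤ t := Nat.one_le_iff_ne_zero.mpr (by
    simp only [htdef, ne_eq, Nat.ceil_eq_zero, not_le]
    positivity)
  have htR : (t:ℝ) ≤ c * Real.log n + 1 :=
    le_of_lt (Nat.ceil_lt_add_one (by positivity))
  have hmain1 : c * Real.log n + 1 ≤ ε^2/16 * Real.sqrt n := hN1 n hn1
  have hmain2 : c * Real.log n + 1 ≤ ε/4 * Real.sqrt n := hN2 n hn2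
  have hsqrt_le : Real.sqrt n ≤ n := by
    nlinarith [Real.sq_sqrt hnR.le, Real.sqrt_nonneg (n:ℝ), Real.sqrt_le_sqrt (show (n:ℝ) ≤ n^2 by nlinarith)]
  have ht_small : (t:ℝ) ≤ ε * n / 4 := by
    have : ε/4 * Real.sqrt n ≤ ε/4 * n := by
      apply mul_le_mul_of_nonneg_left hsqrt_le (by positivity)
    linarith
  -- degrees
  set Nb : Fin n → Finset (Fin n) := fun y => univ.filter (fun x => G x y) with hNb
  set d : Fin n → ℕ := fun y => (Nb y).card with hd
  -- edge count
  have hcard : (Nat.card {p : Fin n × Fin n // G p.1 p.2}) = ∑ y, d y := by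
    rw [Nat.card_eq_fintype_card, Fintype.card_subtype]
    rw [← Finset.univ_product_univ, Finset.card_filter, Finset.sum_product, Finset.sum_comm]
    refine Finset.sum_congr rfl fun y _ => ?_
    simp only [hd, hNb]
    exact (Finset.card_filter _ _).symm
  have hGD : ε * (n:ℝ)^2 ≤ ((∑ y, d y : ℕ) : ℝ) := by rw [← hcard]; exact hG
  set a : ℕ := ⌈ε * n / 2⌉₊ with hadef
  have haR : ε * n / 2 ≤ (a:ℝ) := Nat.le_ceil _
  have haR2 : (a:ℝ) < ε * n / 2 + 1 := Nat.ceil_lt_add_one (by positivity)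
  have ha1 : 1 ≤ a := by
    rw [hadef]; exact Nat.one_le_iff_ne_zero.mpr (by
      simp only [ne_eq, Nat.ceil_eq_zero, not_le]; positivity)
  set H : Finset (Fin n) := univ.filter (fun y => a ≤ d y) with hHdef
  set K : ℕ := H.card with hKdef
  have hdle : ∀ y, d y ≤ n := fun y => by
    simpa using (Finset.card_filter_le univ (fun x => G x y))
  have hsplit : ∑ y, d y ≤ K * n + n * (a - 1) := by
    rw [← Finset.sum_filter_add_sum_filter_not univ (fun y => a ≤ d y) d]
    have h1 : ∑ y ∈ H, d y ≤ K * n := by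
      rw [hKdef]
      simpa using Finset.sum_le_card_nsmul H d n (fun y _ => hdle y)
    have h2 : ∑ y ∈ univ.filter (fun y => ¬ a ≤ d y), d y ≤ n * (a - 1) := by
      calc ∑ y ∈ univ.filter (fun y => ¬ a ≤ d y), d y
          ≤ (univ.filter (fun y => ¬ a ≤ d y)).card * (a-1) := by
            simpa using Finset.sum_le_card_nsmul _ d (a-1)
              (fun y hy => by have := (Finset.mem_filter.mp hy).2; omega)
        _ ≤ n * (a-1) := by
            apply Nat.mul_le_mul_right
            simpa using (Finset.card_filter_le univ (fun y => ¬ a ≤ d y))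
    rw [hHdef] at h1
    omega
  have hKR : ε * n / 2 ≤ (K:ℝ) := by
    have hsplitR : ((∑ y, d y : ℕ):ℝ) ≤ (K:ℝ) * n + n * ((a:ℝ) - 1) := by
      have hc1 : ((a - 1 : ℕ):ℝ) = (a:ℝ) - 1 := by
        rw [Nat.cast_sub ha1]; norm_num
      calc ((∑ y, d y : ℕ):ℝ) ≤ ((K * n + n * (a - 1) : ℕ):ℝ) := Nat.cast_le.mpr hsplit
        _ = (K:ℝ) * n + n * ((a:ℝ) - 1) := by rw [Nat.cast_add, Nat.cast_mul, Nat.cast_mul, hc1]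
    nlinarith [hGD, hnR]
  have hta : t ≤ a := by
    have : (t:ℝ) ≤ (a:ℝ) := by linarith
    exact_mod_cast this
  have htn : t ≤ n := by
    have hεn : ε * n ≤ n := mul_le_of_le_one_left hnR.le hε1.le
    have : (t:ℝ) ≤ (n:ℝ) := by linarith
    exact_mod_cast this
  set w : ℕ := a + 1 - t with hwdef
  have hwR : (w:ℝ) = (a:ℝ) + 1 - t := by
    rw [hwdef, Nat.cast_sub (by omega)]; push_cast; ring
  have hw4 : ε * n / 4 ≤ (w:ℝ) := by rw [hwR]; linarith
  have hb0 : (0:ℝ) < ε/4 := by positivity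
  have hb1 : ε/4 ≤ 1 := by linarith
  have hpow : (ε/4) * (1/Real.sqrt n) ≤ (ε/4)^(t:ℕ) := by
    have h1 : ((ε/4:ℝ))^(t:ℕ) = (ε/4) ^ ((t:ℕ):ℝ) := (Real.rpow_natCast _ t).symm
    have h2 : (ε/4:ℝ)^(c * Real.log n + 1) ≤ (ε/4) ^ ((t:ℕ):ℝ) :=
      Real.rpow_le_rpow_of_exponent_ge hb0 hb1 htR
    have h3 : (ε/4:ℝ)^(c * Real.log n + 1)
        = (ε/4)^(c * Real.log n) * (ε/4) := by
      rw [Real.rpow_add hb0, Real.rpow_one]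
    have hlogeq : Real.log (ε/4) = -L := by
      rw [hLdef, ← Real.log_inv]
      congr 1
      field_simp
    have hcL : L * c = 1/2 := by
      rw [hcdef]; field_simp
    have h4 : (ε/4:ℝ)^(c * Real.log n) = 1 / Real.sqrt n := by
      rw [Real.rpow_def_of_pos hb0, hlogeq]
      have hexp : -L * (c * Real.log n) = Real.log n * (-(1/2)) := by
        have h5 : L * c = 1/2 := hcL
        nlinarith [h5]
      rw [hexp, ← Real.rpow_def_of_pos hnR, Real.rpow_neg hnR.le, ← Real.sqrt_eq_rpow]
      rw [one_div]
    rw [h3, h4] at h2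
    rw [h1]
    linarith [h2]
  have hfinR : (t:ℝ) * (n:ℝ)^(t:ℕ) ≤ (K:ℝ) * (w:ℝ)^(t:ℕ) := by
    have hwpow : (ε*n/4)^(t:ℕ) ≤ (w:ℝ)^(t:ℕ) :=
      pow_le_pow_left₀ (by positivity) hw4 t
    have hmul : (ε*n/4:ℝ)^(t:ℕ) = (ε/4)^(t:ℕ) * (n:ℝ)^(t:ℕ) := by
      rw [← mul_pow]; congr 1; ring
    have hnt0 : (0:ℝ) ≤ (n:ℝ)^(t:ℕ) := by positivity
    have hsq0 : (0:ℝ) < Real.sqrt n := Real.sqrt_pos.mpr hnR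
    have hdivsqrt : (n:ℝ) * (1/Real.sqrt n) = Real.sqrt n := by
      rw [mul_one_div, Real.div_sqrt]
    have step1 : (ε*n/2) * ((ε/4) * (1/Real.sqrt n)) * (n:ℝ)^(t:ℕ)
        ≤ (K:ℝ) * (w:ℝ)^(t:ℕ) := by
      calc (ε*n/2) * ((ε/4) * (1/Real.sqrt n)) * (n:ℝ)^(t:ℕ)
          ≤ (ε*n/2) * ((ε/4)^(t:ℕ)) * (n:ℝ)^(t:ℕ) := by
            apply mul_le_mul_of_nonneg_right _ hnt0
            apply mul_le_mul_of_nonneg_left hpow (by positivity)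
        _ = (ε*n/2) * ((ε*n/4)^(t:ℕ)) := by rw [hmul]; ring
        _ ≤ (K:ℝ) * (w:ℝ)^(t:ℕ) := by
            apply mul_le_mul hKR hwpow (by positivity) (by positivity)
    have step2 : (t:ℝ) ≤ (ε*n/2) * ((ε/4) * (1/Real.sqrt n)) := by
      have heq : (ε*n/2) * ((ε/4) * (1/Real.sqrt n)) = (ε^2/8) * ((n:ℝ) * (1/Real.sqrt n)) := by ring
      rw [heq, hdivsqrt]
      nlinarith [hmain1, htR, Real.sqrt_nonneg (n:ℝ)]
    calc (t:ℝ) * (n:ℝ)^(t:ℕ) ≤ ((ε*n/2) * ((ε/4) * (1/Real.sqrt n))) * (n:ℝ)^(t:ℕ) :=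
          mul_le_mul_of_nonneg_right step2 hnt0
      _ ≤ (K:ℝ) * (w:ℝ)^(t:ℕ) := step1
  have hfinN : t * n^t ≤ K * w^t := by exact_mod_cast hfinR
  have hchoose : t * Nat.choose n t ≤ K * Nat.choose a t := by
    have h1 : t * Nat.descFactorial n t ≤ K * Nat.descFactorial a t := by
      calc t * Nat.descFactorial n t ≤ t * n^t :=
            Nat.mul_le_mul_left _ (Nat.descFactorial_le_pow _ _)
        _ ≤ K * w^t := hfinN
        _ ≤ K * Nat.descFactorial a t :=
            Nat.mul_le_mul_left _ (by rw [hwdef]; exact Nat.pow_sub_le_descFactorial a t)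
    rw [Nat.descFactorial_eq_factorial_mul_choose, Nat.descFactorial_eq_factorial_mul_choose] at h1
    have h2 : (t.factorial) * (t * Nat.choose n t) ≤ (t.factorial) * (K * Nat.choose a t) := by
      calc (t.factorial) * (t * Nat.choose n t) = t * (t.factorial * Nat.choose n t) := by ring
        _ ≤ K * (t.factorial * Nat.choose a t) := h1
        _ = (t.factorial) * (K * Nat.choose a t) := by ring
    exact Nat.le_of_mul_le_mul_left h2 (Nat.factorial_pos t)
  have hlow : K * Nat.choose a t ≤ ∑ y, Nat.choose (d y) t := by
    calc K * Nat.choose a t ≤ ∑ y ∈ H, Nat.choose (d y) t := by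
          simpa [hKdef, mul_comm] using Finset.card_nsmul_le_sum H (fun y => Nat.choose (d y) t)
            (Nat.choose a t) (fun y hy => Nat.choose_le_choose t ((Finset.mem_filter.mp hy).2))
      _ ≤ ∑ y, Nat.choose (d y) t :=
          Finset.sum_le_sum_of_subset (Finset.filter_subset _ _)
  set B : Finset (Finset (Fin n)) := (univ : Finset (Fin n)).powersetCard t with hBdef
  have hdc : ∑ y, Nat.choose (d y) t = ∑ S ∈ B, (univ.filter (fun y => S ⊆ Nb y)).card := by
    have hy : ∀ y : Fin n, Nat.choose (d y) t = (B.filter (fun S => S ⊆ Nb y)).card := by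
      intro y
      rw [hd]
      rw [← Finset.card_powersetCard]
      congr 1
      ext S
      simp only [Finset.mem_powersetCard, Finset.mem_filter, hBdef]
      constructor
      · rintro ⟨h1, h2⟩; exact ⟨⟨Finset.subset_univ S, h2⟩, h1⟩
      · rintro ⟨⟨_, h2⟩, h1⟩; exact ⟨h1, h2⟩
    calc ∑ y, Nat.choose (d y) t = ∑ y, (B.filter (fun S => S ⊆ Nb y)).card :=
          Finset.sum_congr rfl (fun y _ => hy y)
      _ = ∑ y : Fin n, ∑ S ∈ B, if S ⊆ Nb y then 1 else 0 :=
          Finset.sum_congr rfl (fun y _ => Finset.card_filter _ _)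
      _ = ∑ S ∈ B, ∑ y : Fin n, if S ⊆ Nb y then 1 else 0 := Finset.sum_comm
      _ = ∑ S ∈ B, (univ.filter (fun y => S ⊆ Nb y)).card :=
          Finset.sum_congr rfl (fun S _ => (Finset.card_filter _ _).symm)
  have hBcard : B.card = Nat.choose n t := by
    rw [hBdef, Finset.card_powersetCard]
    congr 1
    simp
  have hCpos : 0 < Nat.choose n t := Nat.choose_pos htn
  obtain ⟨S, hSB, hSbig⟩ : ∃ S ∈ B, t ≤ (univ.filter (fun y => S ⊆ Nb y)).card := by
    by_contra hcon
    push_neg at hcon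
    have hub : ∑ S ∈ B, (univ.filter (fun y => S ⊆ Nb y)).card ≤ B.card * (t-1) := by
      simpa using Finset.sum_le_card_nsmul B _ (t-1)
        (fun S hS => by have := hcon S hS; omega)
    rw [hBcard] at hub
    have hlb : t * Nat.choose n t ≤ ∑ S ∈ B, (univ.filter (fun y => S ⊆ Nb y)).card :=
      le_trans hchoose (le_trans hlow (le_of_eq hdc))
    have hlt : Nat.choose n t * (t-1) < Nat.choose n t * t :=
      (Nat.mul_lt_mul_left hCpos).mpr (by omega)
    have hcontr : t * Nat.choose n t ≤ Nat.choose n t * (t-1) := le_trans hlb hub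
    rw [mul_comm] at hcontr
    omega
  have hScard : S.card = t := (Finset.mem_powersetCard.mp hSB).2
  obtain ⟨Y, hYsub, hYcard⟩ := Finset.exists_subset_card_eq hSbig
  refine ⟨t, S, Y, ht_log, hScard, hYcard, fun u hu v hv => ?_⟩
  have hv' := hYsub hv
  rw [Finset.mem_filter] at hv'
  have hmem := hv'.2 hu
  rw [hNb] at hmem
  simpa using (Finset.mem_filter.mp hmem).2
end

section
/- Let Δ' ≥ 13.5 and N ≥ 2 with m := 2N log Δ' / Δ' ≥ 6/5. In the random bipartite graph G(N, N, Δ'/N), the probability that there exist X and Y, one in each part, with |X| = |Y| = ⌈m⌉ and no edges between X and Y, is at most (e / (2 log Δ'))^{2m}, which is at most 1/4. -/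
open MeasureTheory

/-- The Bernoulli measure with success probability `p` on `Bool`. -/
noncomputable def bern (p : ℝ) : Measure Bool :=
  ENNReal.ofReal p • Measure.dirac true + ENNReal.ofReal (1 - p) • Measure.dirac false

instance bern.instIsFiniteMeasure (p : ℝ) : IsFiniteMeasure (bern p) := by
  constructor
  rw [bern]
  simp only [Measure.add_apply, Measure.smul_apply, smul_eq_mul, measure_univ, mul_one]
  exact ENNReal.add_lt_top.mpr ⟨ENNReal.ofReal_lt_top, ENNReal.ofReal_lt_top⟩

lemma bern_false (p : ℝ) : bern p {false} = ENNReal.ofReal (1 - p) := by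
  simp [bern, Measure.dirac_apply]

lemma bern_univ {p : ℝ} (h0 : 0 ≤ p) (h1 : p ≤ 1) : bern p Set.univ = 1 := by
  simp only [bern, Measure.add_apply, Measure.smul_apply, smul_eq_mul, measure_univ, mul_one]
  rw [← ENNReal.ofReal_add h0 (by linarith)]
  norm_num

/-- The random bipartite graph `G(N, N, p)`: each of the `N²` possible edges is
present independently with probability `p`. -/
noncomputable def randomBipartite (N : ℕ) (p : ℝ) : Measure (Fin N × Fin N → Bool) :=
  Measure.pi fun _ : Fin N × Fin N => bern p

lemma measure_bihole (N : ℕ) (p : ℝ) (h0 : 0 ≤ p) (h1 : p ≤ 1) (X Y : Finset (Fin N)) :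
    randomBipartite N p {g | ∀ a ∈ X, ∀ b ∈ Y, g (a, b) = false}
      = ENNReal.ofReal (1 - p) ^ (X.card * Y.card) := by
  classical
  have hset : {g : Fin N × Fin N → Bool | ∀ a ∈ X, ∀ b ∈ Y, g (a, b) = false}
      = Set.pi Set.univ (fun i => if i ∈ X ×ˢ Y then ({false} : Set Bool) else Set.univ) := by
    ext g
    simp only [Set.mem_setOf_eq, Set.mem_pi, Set.mem_univ, forall_true_left]
    constructor
    · intro h i
      by_cases hi : i ∈ X ×ˢ Y
      · rw [if_pos hi]
        obtain ⟨h1, h2⟩ := Finset.mem_product.mp hi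
        simpa using h i.1 h1 i.2 h2
      · rw [if_neg hi]; trivial
    · intro h a ha b hb
      have h2 := h (a, b)
      rw [if_pos (Finset.mem_product.mpr ⟨ha, hb⟩)] at h2
      exact h2
  rw [hset, randomBipartite, Measure.pi_pi]
  have hb : ∀ i : Fin N × Fin N,
      bern p (if i ∈ X ×ˢ Y then ({false} : Set Bool) else Set.univ)
        = if i ∈ X ×ˢ Y then ENNReal.ofReal (1 - p) else 1 := by
    intro i; split
    · exact bern_false p
    · exact bern_univ h0 h1
  simp_rw [hb]
  rw [Finset.prod_ite_mem, Finset.univ_inter, Finset.prod_const, Finset.card_product]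

lemma log_135 : (2.59 : ℝ) ≤ Real.log 13.5 := by
  have h98 : (1 / 9 : ℝ) ≤ Real.log (9 / 8) := by
    have h := Real.log_le_sub_one_of_pos (show (0 : ℝ) < 8 / 9 by norm_num)
    have e : Real.log (9 / 8) = -Real.log (8 / 9) := by
      rw [← Real.log_inv]; norm_num
    rw [e]; linarith
  have h9 : Real.log 9 = 3 * Real.log 2 + Real.log (9 / 8) := by
    rw [show (9 : ℝ) = 2 ^ 3 * (9 / 8) by norm_num,
      Real.log_mul (by norm_num) (by norm_num), Real.log_pow]
    push_cast; ring
  have h93 : Real.log 9 = 2 * Real.log 3 := by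
    rw [show (9 : ℝ) = 3 ^ 2 by norm_num, Real.log_pow]; push_cast; ring
  have h2lo : (0.6931471803 : ℝ) < Real.log 2 := Real.log_two_gt_d9
  have h2hi : Real.log 2 < 0.6931471808 := Real.log_two_lt_d9
  have h135 : Real.log 13.5 = 3 * Real.log 3 - Real.log 2 := by
    rw [show (13.5 : ℝ) = 27 / 2 by norm_num, Real.log_div (by norm_num) (by norm_num),
      show (27 : ℝ) = 3 ^ 3 by norm_num, Real.log_pow]
    push_cast; ring
  rw [h135]; linarith

/-- for `Δ' ≥ 13.5` and `m = 2N log Δ' / Δ' ≥ 6/5`, in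
`G(N, N, Δ'/N)` the probability that some pair of `⌈m⌉`-sets, one in each
part, spans no edge is at most `(e / (2 log Δ'))^{2m} ≤ 1/4`. -/
theorem random_graph_no_large_bihole (N : ℕ) (hN : 2 ≤ N) (Δ' : ℝ)
    (hΔ : 13.5 ≤ Δ') (hΔN : Δ' ≤ N) (m : ℝ)
    (hm : m = 2 * N * Real.log Δ' / Δ') (hm65 : 6 / 5 ≤ m) :
    randomBipartite N (Δ' / N)
        {g : Fin N × Fin N → Bool | ∃ X Y : Finset (Fin N),
          X.card = ⌈m⌉₊ ∧ Y.card = ⌈m⌉₊ ∧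
          ∀ a ∈ X, ∀ b ∈ Y, g (a, b) = false} ≤
      ENNReal.ofReal ((Real.exp 1 / (2 * Real.log Δ')) ^ (2 * m)) ∧
    (Real.exp 1 / (2 * Real.log Δ')) ^ (2 * m) ≤ 1 / 4 := by
  classical
  have hΔ0 : (0 : ℝ) < Δ' := by linarith [show (0:ℝ) < 13.5 by norm_num]
  have hN0 : (0 : ℝ) < (N : ℝ) := by
    have : (0 : ℕ) < N := by omega
    exact_mod_cast this
  set L : ℝ := Real.log Δ' with hLdef
  have hL : (2.59 : ℝ) ≤ L := log_135.trans (Real.log_le_log (by norm_num) hΔ)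
  set p : ℝ := Δ' / N with hpdef
  have hp0 : 0 ≤ p := div_nonneg hΔ0.le hN0.le
  have hp1 : p ≤ 1 := (div_le_one hN0).mpr hΔN
  have h1p : (0 : ℝ) ≤ 1 - p := by linarith
  set k : ℕ := ⌈m⌉₊ with hkdef
  set K : ℝ := (k : ℝ) with hKdef
  have hmk : m ≤ K := Nat.le_ceil m
  have hK2 : (2 : ℝ) ≤ K := by
    have : (1 : ℕ) < k := by
      rw [hkdef, Nat.lt_ceil]; push_cast; linarith
    rw [hKdef]; exact_mod_cast this
  have hK0 : (0 : ℝ) < K := by linarith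
  have hpm : p * m = 2 * L := by
    rw [hpdef, hm]; field_simp
  have hNd : (N : ℝ) / Δ' = m / (2 * L) := by
    rw [hm]; field_simp
  have he1 : Real.exp 1 < 2.7182818286 := Real.exp_one_lt_d9
  have he0 : (0 : ℝ) < Real.exp 1 := Real.exp_pos 1
  set b : ℝ := Real.exp 1 / (2 * L) with hbdef
  have hb0 : 0 < b := by positivity
  have hb1 : b ≤ 1 := by
    rw [hbdef, div_le_one (by linarith)]; linarith
  -- choose bound
  have hCb : (Nat.choose N k : ℝ) ≤ ((N : ℝ) * Real.exp 1 / K) ^ k := by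
    have h1 : (Nat.choose N k : ℝ) ≤ (N : ℝ) ^ k / (Nat.factorial k : ℝ) :=
      Nat.choose_le_pow_div k N
    refine h1.trans ?_
    have hfact : (0 : ℝ) < (Nat.factorial k : ℝ) := by
      exact_mod_cast Nat.factorial_pos k
    have h2 : K ^ k / (Nat.factorial k : ℝ) ≤ Real.exp k :=
      Real.pow_div_factorial_le_exp K hK0.le k
    have h3 : K ^ k ≤ Real.exp k * (Nat.factorial k : ℝ) := by
      rwa [div_le_iff₀ hfact] at h2
    rw [div_pow, mul_pow, Real.exp_one_pow]
    rw [div_le_div_iff₀ hfact (by positivity)]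
    calc (N : ℝ) ^ k * K ^ k ≤ (N : ℝ) ^ k * (Real.exp k * (Nat.factorial k : ℝ)) := by
          exact mul_le_mul_of_nonneg_left h3 (by positivity)
      _ = (N : ℝ) ^ k * Real.exp k * (Nat.factorial k : ℝ) := by ring
  -- (1-p)^{k²} bound
  have hstep2 : (1 - p) ^ (k * k) ≤ Real.exp (-(2 * L * K)) := by
    have h1 : (1 - p) ^ (k * k) ≤ Real.exp (-p) ^ (k * k) :=
      pow_le_pow_left₀ h1p (Real.one_sub_le_exp_neg p) _
    refine h1.trans ?_
    rw [← Real.exp_nat_mul, Real.exp_le_exp]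
    push_cast
    have hpK : 2 * L ≤ p * K := by
      rw [← hpm]; exact mul_le_mul_of_nonneg_left hmk hp0
    nlinarith
  -- key real inequality
  have key : (Nat.choose N k : ℝ) ^ 2 * (1 - p) ^ (k * k) ≤ b ^ (2 * k) := by
    have hC0 : (0 : ℝ) ≤ (Nat.choose N k : ℝ) := Nat.cast_nonneg _
    have hCb2 : (Nat.choose N k : ℝ) ^ 2 ≤ ((N : ℝ) * Real.exp 1 / K) ^ (2 * k) := by
      rw [mul_comm 2 k, pow_mul]
      exact pow_le_pow_left₀ (by positivity) hCb 2
    calc (Nat.choose N k : ℝ) ^ 2 * (1 - p) ^ (k * k)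
        ≤ ((N : ℝ) * Real.exp 1 / K) ^ (2 * k) * Real.exp (-(2 * L * K)) := by
          apply mul_le_mul hCb2 hstep2 (by positivity) (by positivity)
      _ = ((N : ℝ) * Real.exp 1 / (K * Δ')) ^ (2 * k) := by
          have hexp : Real.exp (-(2 * L * K)) = (Δ'⁻¹) ^ (2 * k) := by
            rw [← Real.exp_log hΔ0, ← Real.exp_neg, ← Real.exp_nat_mul, Real.exp_eq_exp]
            rw [hKdef]; push_cast; ring
          rw [hexp, ← mul_pow]
          congr 1
          field_simp
      _ ≤ b ^ (2 * k) := by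
          apply pow_le_pow_left₀ (by positivity)
          rw [hbdef, div_le_div_iff₀ (by positivity) (by linarith)]
          have : (N : ℝ) * Real.exp 1 = Real.exp 1 * Δ' * (m / (2 * L)) := by
            rw [← hNd]; field_simp
          rw [this]
          have h2L : (0 : ℝ) < 2 * L := by linarith
          calc Real.exp 1 * Δ' * (m / (2 * L)) * (2 * L)
              = Real.exp 1 * Δ' * m := by field_simp
            _ ≤ Real.exp 1 * Δ' * K := mul_le_mul_of_nonneg_left hmk (by positivity)
            _ = Real.exp 1 * (K * Δ') := by ring
  -- pass from natural power 2k to real power 2m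
  have hrp : b ^ (2 * k) ≤ b ^ (2 * m) := by
    rw [← Real.rpow_natCast b (2 * k)]
    apply Real.rpow_le_rpow_of_exponent_ge hb0 hb1
    push_cast
    linarith
  constructor
  · -- the measure bound
    set A : Finset (Fin N) × Finset (Fin N) → Set (Fin N × Fin N → Bool) :=
      fun q => {g | ∀ a ∈ q.1, ∀ b ∈ q.2, g (a, b) = false} with hA
    set P : Finset (Finset (Fin N) × Finset (Fin N)) :=
      (Finset.univ.powersetCard k) ×ˢ (Finset.univ.powersetCard k) with hP
    have hsub : {g : Fin N × Fin N → Bool | ∃ X Y : Finset (Fin N),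
        X.card = ⌈m⌉₊ ∧ Y.card = ⌈m⌉₊ ∧ ∀ a ∈ X, ∀ b ∈ Y, g (a, b) = false}
        ⊆ ⋃ q ∈ P, A q := by
      rintro g ⟨X, Y, hX, hY, hg⟩
      have hmem : (X, Y) ∈ P := by
        rw [hP, Finset.mem_product]
        exact ⟨Finset.mem_powersetCard_univ.mpr hX, Finset.mem_powersetCard_univ.mpr hY⟩
      exact Set.mem_biUnion hmem hg
    have h1 : randomBipartite N p {g : Fin N × Fin N → Bool | ∃ X Y : Finset (Fin N),
        X.card = ⌈m⌉₊ ∧ Y.card = ⌈m⌉₊ ∧ ∀ a ∈ X, ∀ b ∈ Y, g (a, b) = false}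
        ≤ ∑ q ∈ P, randomBipartite N p (A q) :=
      (measure_mono hsub).trans (measure_biUnion_finset_le P A)
    have h2 : ∑ q ∈ P, randomBipartite N p (A q)
        = (Nat.choose N k : ENNReal) ^ 2 * ENNReal.ofReal (1 - p) ^ (k * k) := by
      have hterm : ∀ q ∈ P, randomBipartite N p (A q)
          = ENNReal.ofReal (1 - p) ^ (k * k) := by
        intro q hq
        rw [hP, Finset.mem_product] at hq
        rw [hA, measure_bihole N p hp0 hp1 q.1 q.2,
          Finset.mem_powersetCard_univ.mp hq.1, Finset.mem_powersetCard_univ.mp hq.2]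
      rw [Finset.sum_congr rfl hterm, Finset.sum_const, hP, Finset.card_product,
        Finset.card_powersetCard, Finset.card_univ, Fintype.card_fin, nsmul_eq_mul]
      push_cast
      ring
    have h3 : (Nat.choose N k : ENNReal) ^ 2 * ENNReal.ofReal (1 - p) ^ (k * k)
        = ENNReal.ofReal ((Nat.choose N k : ℝ) ^ 2 * (1 - p) ^ (k * k)) := by
      rw [ENNReal.ofReal_mul (by positivity), ENNReal.ofReal_pow (Nat.cast_nonneg _),
        ENNReal.ofReal_natCast, ENNReal.ofReal_pow h1p]
    calc randomBipartite N p {g : Fin N × Fin N → Bool | ∃ X Y : Finset (Fin N),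
          X.card = ⌈m⌉₊ ∧ Y.card = ⌈m⌉₊ ∧ ∀ a ∈ X, ∀ b ∈ Y, g (a, b) = false}
        ≤ ∑ q ∈ P, randomBipartite N p (A q) := h1
      _ = ENNReal.ofReal ((Nat.choose N k : ℝ) ^ 2 * (1 - p) ^ (k * k)) := by
          rw [h2, h3]
      _ ≤ ENNReal.ofReal (b ^ (2 * m)) :=
          ENNReal.ofReal_le_ofReal (key.trans hrp)
  · -- numeric bound b^{2m} ≤ 1/4
    have hb525 : b ≤ 0.525 := by
      rw [hbdef, div_le_iff₀ (by linarith)]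
      nlinarith
    have h1 : b ^ (2 * m) ≤ b ^ ((12 : ℝ) / 5) :=
      Real.rpow_le_rpow_of_exponent_ge hb0 hb1 (by linarith)
    have h2 : b ^ ((12 : ℝ) / 5) ≤ (0.525 : ℝ) ^ ((12 : ℝ) / 5) :=
      Real.rpow_le_rpow hb0.le hb525 (by norm_num)
    have h3 : (0.525 : ℝ) ^ ((12 : ℝ) / 5) ≤ 1 / 4 := by
      have h5 : ((0.525 : ℝ) ^ ((12 : ℝ) / 5)) ^ (5 : ℕ) ≤ ((1 : ℝ) / 4) ^ (5 : ℕ) := by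
        rw [← Real.rpow_natCast ((0.525 : ℝ) ^ ((12 : ℝ) / 5)) 5, ← Real.rpow_mul (by norm_num)]
        norm_num
      exact le_of_pow_le_pow_left₀ (by norm_num) (by norm_num)
        h5
    exact h1.trans (h2.trans h3)
end

section
/- For every integer Δ ≥ Δ₀ (for some absolute constant Δ₀) and every n ≥ 5Δ log Δ, every bipartite graph with parts A, B of size n in which every vertex of A has degree at most Δ contains a bi-hole of size at least (log Δ / (2Δ)) · n. -/
open Finset

lemma degA_eq {n : ℕ} (G : Fin n → Fin n → Prop) (a : Fin n) [DecidablePred (G a)] :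
    degA G a = (univ.filter (fun b => G a b)).card := by
  simp [degA, Nat.card_eq_fintype_card, Fintype.card_subtype]

lemma bihole_of_count {n Δ k : ℕ} (G : Fin n → Fin n → Prop)
    (hdeg : ∀ a, degA G a ≤ Δ) (hkn : k ≤ n)
    (hcount : k * Nat.choose n k ≤ n * Nat.choose (n - Δ) k) : BiHole n k G := by
  classical
  set S := (univ : Finset (Fin n)).powersetCard k with hS
  have hScard : S.card = Nat.choose n k := by
    simp [hS, card_powersetCard]
  have hfix : ∀ a : Fin n,
      (S.filter (fun Y => ∀ b ∈ Y, ¬ G a b)).card = Nat.choose (n - degA G a) k := by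
    intro a
    have h1 : S.filter (fun Y => ∀ b ∈ Y, ¬ G a b)
        = (univ.filter (fun b => ¬ G a b)).powersetCard k := by
      ext Y
      simp only [hS, mem_filter, mem_powersetCard, subset_iff, mem_univ, true_and,
        mem_filter]
      tauto
    rw [h1, card_powersetCard]
    congr 1
    have h2 : (univ.filter (fun b => G a b)).card
        + (univ.filter (fun b => ¬ G a b)).card = n := by
      rw [Finset.card_filter_add_card_filter_not]
      simp
    have := degA_eq G a
    omega
  -- pigeonhole
  have hsum : ∑ Y ∈ S, (k : ℕ)
      ≤ ∑ Y ∈ S, (univ.filter (fun a => ∀ b ∈ Y, ¬ G a b)).card := by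
    have hswap : ∑ Y ∈ S, (univ.filter (fun a => ∀ b ∈ Y, ¬ G a b)).card
        = ∑ a : Fin n, (S.filter (fun Y => ∀ b ∈ Y, ¬ G a b)).card := by
      simp only [card_filter]
      exact Finset.sum_comm
    rw [hswap]
    calc ∑ _Y ∈ S, k = k * Nat.choose n k := by rw [sum_const, hScard]; ring
      _ ≤ n * Nat.choose (n - Δ) k := hcount
      _ = ∑ _a : Fin n, Nat.choose (n - Δ) k := by simp [mul_comm]
      _ ≤ ∑ a : Fin n, Nat.choose (n - degA G a) k := by
          refine Finset.sum_le_sum fun a _ => Nat.choose_le_choose _ (by have := hdeg a; omega)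
      _ = ∑ a : Fin n, (S.filter (fun Y => ∀ b ∈ Y, ¬ G a b)).card := by
          simp [hfix]
  have hSne : S.Nonempty := by
    rw [← Finset.card_pos, hScard]
    exact Nat.choose_pos hkn
  obtain ⟨Y, hYS, hY⟩ := Finset.exists_le_of_sum_le hSne hsum
  obtain ⟨X, hXsub, hXcard⟩ := Finset.exists_subset_card_eq hY
  refine ⟨X, Y, hXcard, (mem_powersetCard.mp hYS).2, fun a ha b hb => ?_⟩
  exact (mem_filter.mp (hXsub ha)).2 b hb


lemma choose_pred (m k : ℕ) (h : 1 ≤ m) :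
    m * Nat.choose (m - 1) k = Nat.choose m k * (m - k) := by
  obtain ⟨m', rfl⟩ : ∃ m', m = m' + 1 := ⟨m - 1, by omega⟩
  simp only [Nat.add_sub_cancel]
  have h1 := Nat.add_one_mul_choose_eq m' k
  have h2 := Nat.choose_succ_right_eq (m' + 1) k
  omega

lemma choose_prod {n k : ℕ} : ∀ Δ : ℕ, k + Δ ≤ n →
    Nat.choose n k * ∏ i ∈ range Δ, (n - k - i)
      = Nat.choose (n - Δ) k * ∏ i ∈ range Δ, (n - i) := by
  intro Δ
  induction Δ with
  | zero => simp
  | succ d ih =>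
    intro h
    have hp : Nat.choose (n - d) k * (n - k - d) = (n - d) * Nat.choose (n - (d+1)) k := by
      have := choose_pred (n - d) k (by omega)
      have e1 : n - d - 1 = n - (d + 1) := by omega
      have e2 : n - d - k = n - k - d := by omega
      rw [e1, e2] at this
      omega
    calc Nat.choose n k * ∏ i ∈ range (d+1), (n - k - i)
        = (Nat.choose n k * ∏ i ∈ range d, (n - k - i)) * (n - k - d) := by
          rw [Finset.prod_range_succ]; ring
      _ = (Nat.choose (n - d) k * ∏ i ∈ range d, (n - i)) * (n - k - d) := by
          rw [ih (by omega)]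
      _ = (Nat.choose (n - d) k * (n - k - d)) * ∏ i ∈ range d, (n - i) := by ring
      _ = ((n - d) * Nat.choose (n - (d+1)) k) * ∏ i ∈ range d, (n - i) := by rw [hp]
      _ = Nat.choose (n - (d+1)) k * ∏ i ∈ range (d+1), (n - i) := by
          rw [Finset.prod_range_succ]; ring

lemma count_of_prod {n k Δ : ℕ} (h : k + Δ ≤ n)
    (hprod : k * ∏ i ∈ range Δ, (n - i) ≤ n * ∏ i ∈ range Δ, (n - k - i)) :
    k * Nat.choose n k ≤ n * Nat.choose (n - Δ) k := by
  have hP : 0 < ∏ i ∈ range Δ, (n - k - i) := by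
    apply Finset.prod_pos
    intro i hi
    simp only [mem_range] at hi
    omega
  apply Nat.le_of_mul_le_mul_right _ hP
  calc k * Nat.choose n k * ∏ i ∈ range Δ, (n - k - i)
      = k * (Nat.choose n k * ∏ i ∈ range Δ, (n - k - i)) := by ring
    _ = k * (Nat.choose (n - Δ) k * ∏ i ∈ range Δ, (n - i)) := by rw [choose_prod Δ h]
    _ = Nat.choose (n - Δ) k * (k * ∏ i ∈ range Δ, (n - i)) := by ring
    _ ≤ Nat.choose (n - Δ) k * (n * ∏ i ∈ range Δ, (n - k - i)) :=
        Nat.mul_le_mul_left _ hprod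
    _ = n * Nat.choose (n - Δ) k * ∏ i ∈ range Δ, (n - k - i) := by ring


set_option maxHeartbeats 2000000 in
lemma analytic {Δ n k : ℕ} (hL : (100:ℝ) ≤ Real.log Δ)
    (hn : 5 * (Δ:ℝ) * Real.log Δ ≤ n)
    (hk1 : Real.log Δ / (2*Δ) * n ≤ k) (hk2 : (k:ℝ) ≤ Real.log Δ / (2*Δ) * n + 1) :
    k + Δ ≤ n ∧ k * ∏ i ∈ range Δ, (n - i) ≤ n * ∏ i ∈ range Δ, (n - k - i) := by
  set D : ℝ := (Δ:ℝ) with hD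
  set N : ℝ := (n:ℝ) with hN
  set K : ℝ := (k:ℝ) with hK
  set L : ℝ := Real.log D with hLdef
  -- basic positivity
  have hD1 : (1:ℝ) < D := by
    by_contra h
    push_neg at h
    have := Real.log_nonpos (Nat.cast_nonneg Δ) h
    rw [← hLdef] at this
    linarith
  have hD0 : (0:ℝ) < D := by linarith
  have hexpD : Real.exp 100 ≤ D := by
    have := Real.exp_log hD0
    calc Real.exp 100 ≤ Real.exp L := Real.exp_le_exp.mpr hL
      _ = D := this
  have hD6 : (10:ℝ)^6 ≤ D := by
    have h1 : (11:ℝ) ≤ Real.exp 10 := by linarith [Real.add_one_le_exp (10:ℝ)]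
    have h2 : ((11:ℝ))^10 ≤ (Real.exp 10)^10 := pow_le_pow_left₀ (by norm_num) h1 10
    have h3 : (Real.exp 10)^10 = Real.exp 100 := by
      rw [← Real.exp_nat_mul]; norm_num
    have h4 : (10:ℝ)^6 ≤ (11:ℝ)^10 := by norm_num
    linarith
  have hsD : (1000:ℝ) ≤ Real.sqrt D := by
    have : Real.sqrt ((10:ℝ)^6) ≤ Real.sqrt D := Real.sqrt_le_sqrt hD6
    have h5 : Real.sqrt ((10:ℝ)^6) = 1000 := by
      rw [show ((10:ℝ)^6) = 1000^2 by norm_num, Real.sqrt_sq (by norm_num)]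
    linarith
  have hsDsq : Real.sqrt D * Real.sqrt D = D := Real.mul_self_sqrt hD0.le
  have hL2 : L ≤ 2 * Real.sqrt D := by
    have h1 : Real.log (Real.sqrt D) = L / 2 := by
      rw [hLdef, Real.log_sqrt hD0.le]
    have h2 : Real.log (Real.sqrt D) ≤ Real.sqrt D - 1 :=
      Real.log_le_sub_one_of_pos (by positivity)
    linarith
  have hLD : L / (2*D) ≤ 1 / Real.sqrt D := by
    rw [div_le_div_iff₀ (by positivity) (by positivity)]
    nlinarith [hsDsq, hsD]
  have hN500 : 500 * D ≤ N := by nlinarith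
  have hN0 : (0:ℝ) < N := by nlinarith
  have hkbase : 25000 ≤ L * N / (2*D) := by
    rw [le_div_iff₀ (by positivity)]
    nlinarith
  have hk1' : L / (2*D) * N = L * N / (2*D) := by ring
  have hk2' : K ≤ L * N / (2*D) * (25001/25000) := by
    have : (1:ℝ) ≤ L * N / (2*D) * (1/25000) := by linarith
    calc K ≤ L / (2*D) * N + 1 := hk2
      _ = L * N / (2*D) + 1 := by rw [hk1']
      _ ≤ L * N / (2*D) + L * N / (2*D) * (1/25000) := by linarith
      _ = L * N / (2*D) * (25001/25000) := by ring
  have hKN : K ≤ N / 200 := by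
    have h1 : L * N / (2*D) ≤ N / Real.sqrt D := by
      have := mul_le_mul_of_nonneg_right hLD hN0.le
      calc L * N / (2*D) = (L / (2*D)) * N := by ring
        _ ≤ (1 / Real.sqrt D) * N := this
        _ = N / Real.sqrt D := by ring
    have h2 : N / Real.sqrt D ≤ N / 1000 := by
      apply div_le_div_of_nonneg_left hN0.le (by norm_num) hsD
    calc K ≤ L * N / (2*D) * (25001/25000) := hk2'
      _ ≤ N / 1000 * (25001/25000) := by nlinarith
      _ ≤ N / 200 := by linarith
  have hDN : D ≤ N / 500 := by linarith
  have hden : N * (99/100) ≤ N - K - D := by linarith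
  have hden0 : (0:ℝ) < N - K - D := by nlinarith
  -- nat fact: k + Δ ≤ n
  have hkdn : k + Δ ≤ n := by
    have : K + D ≤ N := by linarith
    have h2 : (k:ℝ) + (Δ:ℝ) ≤ (n:ℝ) := by rw [← hK, ← hD, ← hN]; exact this
    exact_mod_cast h2
  refine ⟨hkdn, ?_⟩
  -- bound on the exponent A = D*K/(N-K-D)
  have hKD : K * D ≤ L * N / 2 + D := by
    have h := mul_le_mul_of_nonneg_right hk2 hD0.le
    calc K * D ≤ (L / (2*D) * N + 1) * D := h
      _ = L * N / 2 + D := by field_simp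
  have hDLN : D ≤ L * N / 50000 := by
    have h := mul_le_mul_of_nonneg_right hL hN0.le
    linarith
  have hA : D * K / (N - K - D) ≤ (51/100) * L := by
    rw [div_le_iff₀ hden0]
    have h1 := mul_le_mul_of_nonneg_left hden (by linarith : (0:ℝ) ≤ 51/100*L)
    linarith [hKD, hDLN, h1]
  have hK25 : (25000:ℝ) ≤ K := by rw [hk1'] at hk1; linarith
  have hK0 : (0:ℝ) < K := by linarith
  have hNK : D / L ≤ N / K := by
    rw [div_le_div_iff₀ (by linarith) hK0]
    linarith [hKD, hDLN]
  have hlogL : Real.log L ≤ L / 5 := by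
    have hsL : (10:ℝ) ≤ Real.sqrt L := by
      have h := Real.sqrt_le_sqrt hL
      rw [show (100:ℝ) = 10^2 by norm_num, Real.sqrt_sq (by norm_num)] at h
      linarith
    have hsLsq : Real.sqrt L * Real.sqrt L = L := Real.mul_self_sqrt (by linarith)
    have h1 : Real.log (Real.sqrt L) = Real.log L / 2 := Real.log_sqrt (by linarith)
    have h2 : Real.log (Real.sqrt L) ≤ Real.sqrt L - 1 :=
      Real.log_le_sub_one_of_pos (by linarith)
    nlinarith [hsLsq, hsL]
  have hlogNK : (51/100)*L ≤ Real.log (N / K) := by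
    have h1 : Real.log (D / L) ≤ Real.log (N / K) :=
      Real.log_le_log (by positivity) hNK
    have h2 : Real.log (D / L) = L - Real.log L := by
      rw [Real.log_div (ne_of_gt hD0) (by positivity : L ≠ 0), ← hLdef]
    linarith
  have hexpA : K * Real.exp (D * (K / (N - K - D))) ≤ N := by
    have e0 : D * (K / (N - K - D)) = D * K / (N - K - D) := by ring
    have h1 : Real.exp (D * (K / (N - K - D))) ≤ Real.exp (Real.log (N/K)) := by
      apply Real.exp_le_exp.mpr
      rw [e0]
      linarith
    rw [Real.exp_log (by positivity)] at h1
    calc K * Real.exp (D * (K / (N - K - D))) ≤ K * (N / K) :=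
          mul_le_mul_of_nonneg_left h1 hK0.le
      _ = N := by field_simp
  -- per-factor bound
  have hfac : ∀ i ∈ range Δ, (N - i) ≤ Real.exp (K/(N-K-D)) * (N - K - i) := by
    intro i hi
    have hiD : (i:ℝ) ≤ D - 1 := by
      rw [mem_range] at hi
      have : (i:ℝ) + 1 ≤ D := by rw [hD]; exact_mod_cast hi
      linarith
    have hden_i : N - K - D < N - K - i := by linarith
    have hx := Real.add_one_le_exp (K/(N-K-i))
    have h1 : N - i ≤ Real.exp (K/(N-K-i)) * (N - K - i) := by
      have := mul_le_mul_of_nonneg_right hx (by linarith : (0:ℝ) ≤ N - K - i)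
      have hne : N - K - (i:ℝ) ≠ 0 := by linarith
      have he : (K/(N-K-i) + 1) * (N - K - i) = N - i := by
        rw [add_mul, div_mul_cancel₀ _ hne]; ring
      linarith [this, he.symm ▸ this]
    have h2 : Real.exp (K/(N-K-i)) ≤ Real.exp (K/(N-K-D)) := by
      apply Real.exp_le_exp.mpr
      apply div_le_div_of_nonneg_left hK0.le hden0 hden_i.le
    calc N - i ≤ Real.exp (K/(N-K-i)) * (N - K - i) := h1
      _ ≤ Real.exp (K/(N-K-D)) * (N - K - i) := by
          apply mul_le_mul_of_nonneg_right h2 (by linarith)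
  have hprodR : ∏ i ∈ range Δ, (N - (i:ℝ)) ≤
      Real.exp (D * (K/(N-K-D))) * ∏ i ∈ range Δ, (N - K - (i:ℝ)) := by
    calc ∏ i ∈ range Δ, (N - (i:ℝ))
        ≤ ∏ i ∈ range Δ, (Real.exp (K/(N-K-D)) * (N - K - (i:ℝ))) := by
          apply Finset.prod_le_prod
          · intro i hi
            rw [mem_range] at hi
            have : (i:ℝ) + 1 ≤ D := by rw [hD]; exact_mod_cast hi
            linarith
          · exact hfac
      _ = Real.exp (K/(N-K-D)) ^ Δ * ∏ i ∈ range Δ, (N - K - (i:ℝ)) := by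
          rw [Finset.prod_mul_distrib, Finset.prod_const, Finset.card_range]
      _ = Real.exp (D * (K/(N-K-D))) * ∏ i ∈ range Δ, (N - K - (i:ℝ)) := by
          rw [← Real.exp_nat_mul, hD]
  have hPnn : (0:ℝ) ≤ ∏ i ∈ range Δ, (N - K - (i:ℝ)) := by
    apply Finset.prod_nonneg
    intro i hi
    rw [mem_range] at hi
    have : (i:ℝ) + 1 ≤ D := by rw [hD]; exact_mod_cast hi
    linarith
  have final : K * ∏ i ∈ range Δ, (N - (i:ℝ)) ≤ N * ∏ i ∈ range Δ, (N - K - (i:ℝ)) := by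
    calc K * ∏ i ∈ range Δ, (N - (i:ℝ))
        ≤ K * (Real.exp (D * (K/(N-K-D))) * ∏ i ∈ range Δ, (N - K - (i:ℝ))) :=
          mul_le_mul_of_nonneg_left hprodR hK0.le
      _ = (K * Real.exp (D * (K/(N-K-D)))) * ∏ i ∈ range Δ, (N - K - (i:ℝ)) := by ring
      _ ≤ N * ∏ i ∈ range Δ, (N - K - (i:ℝ)) :=
          mul_le_mul_of_nonneg_right hexpA hPnn
  -- cast back to ℕ
  have cast1 : ((∏ i ∈ range Δ, (n - i) : ℕ) : ℝ) = ∏ i ∈ range Δ, (N - (i:ℝ)) := by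
    rw [Nat.cast_prod]
    apply Finset.prod_congr rfl
    intro i hi
    rw [mem_range] at hi
    rw [Nat.cast_sub (by omega), hN]
  have cast2 : ((∏ i ∈ range Δ, (n - k - i) : ℕ) : ℝ) = ∏ i ∈ range Δ, (N - K - (i:ℝ)) := by
    rw [Nat.cast_prod]
    apply Finset.prod_congr rfl
    intro i hi
    rw [mem_range] at hi
    have e : n - k - i = n - (k + i) := by omega
    rw [e, Nat.cast_sub (by omega), hN]
    push_cast
    rw [← hK]
    ring
  rw [← @Nat.cast_le ℝ]
  push_cast only [Nat.cast_mul]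
  rw [cast1, cast2]
  rw [← hK, ← hN]
  exact final


/-- there is an absolute constant `Δ₀` such that for every
`Δ ≥ Δ₀` and every `n ≥ 5Δ log Δ`, every `n × n` bipartite graph with
one-sided maximum degree at most `Δ` contains a bi-hole of size at least
`(log Δ / (2Δ)) n`. -/
theorem bihole_lower_bound :
    ∃ Δ₀ : ℕ, ∀ Δ : ℕ, Δ₀ ≤ Δ → ∀ n : ℕ,
      5 * (Δ : ℝ) * Real.log Δ ≤ n →
      ∀ G : Fin n → Fin n → Prop, (∀ a, degA G a ≤ Δ) →
        ∃ k : ℕ, Real.log Δ / (2 * Δ) * n ≤ (k : ℝ) ∧ BiHole n k G := by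
  refine ⟨3^100, ?_⟩
  intro Δ hΔ n hn G hdeg
  have hL : (100:ℝ) ≤ Real.log Δ := by
    have h3 : (1:ℝ) ≤ Real.log 3 := by
      have he : Real.exp 1 ≤ 3 := by
        have := Real.exp_one_lt_d9
        linarith
      calc (1:ℝ) = Real.log (Real.exp 1) := (Real.log_exp 1).symm
        _ ≤ Real.log 3 := Real.log_le_log (Real.exp_pos 1) he
    have hcast : ((3:ℝ))^100 ≤ (Δ:ℝ) := by
      exact_mod_cast (by exact_mod_cast hΔ : ((3^100 : ℕ):ℝ) ≤ (Δ:ℝ))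
    have h1 : Real.log ((3:ℝ)^100) ≤ Real.log Δ :=
      Real.log_le_log (by positivity) hcast
    rw [Real.log_pow] at h1
    push_cast at h1
    linarith
  refine ⟨⌈Real.log Δ / (2*Δ) * n⌉₊, Nat.le_ceil _, ?_⟩
  set k := ⌈Real.log Δ / (2*Δ) * n⌉₊ with hkdef
  have hk1 : Real.log Δ / (2*Δ) * n ≤ (k:ℝ) := Nat.le_ceil _
  have hk2 : (k:ℝ) ≤ Real.log Δ / (2*Δ) * n + 1 := by
    have h0 : (0:ℝ) ≤ Real.log Δ / (2*Δ) * n :=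
      mul_nonneg (div_nonneg (by linarith) (by positivity)) (Nat.cast_nonneg n)
    exact (Nat.ceil_lt_add_one h0).le
  obtain ⟨hkdn, hprod⟩ := analytic hL hn hk1 hk2
  exact bihole_of_count G hdeg (by omega) (count_of_prod hkdn hprod)
end
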